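/- arXiv:1912.12562 — 3 statements merged into one kernel-verified Lean document; each statement's English description precedes it below -/
import Mathlib

section
/- Let X be a vector space of finite cardinality N (over a finite field). Then the probability that a uniformly random linear operator on X is nilpotent is 1/N; equivalently, N times the number of nilpotent operators on X equals the total number of linear operators on X. -/
open Submodule Set

namespace FH

variable {K : Type*} [Field K] {V : Type*} [AddCommGroup V] [Module K V]

lemma pow_glue (T : Module.End K V) (Z : Submodule K V) (a b : ℕ)
    (h1 : ∀ x, (T ^ a) x ∈ Z) (h2 : ∀ z ∈ Z, (T ^ b) z = 0) : T ^ (b + a) = 0 := by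
  ext x
  rw [pow_add, Module.End.mul_apply]
  exact h2 _ (h1 x)

lemma quot_comm (T : Module.End K V) (Z : Submodule K V) (S : Module.End K (V ⧸ Z))
    (h : ∀ x, Z.mkQ (T x) = S (Z.mkQ x)) :
    ∀ (j : ℕ) (x : V), Z.mkQ ((T ^ j) x) = (S ^ j) (Z.mkQ x) := by
  intro j
  induction j with
  | zero => intro x; simp
  | succ j ih =>
    intro x
    rw [pow_succ, pow_succ, Module.End.mul_apply, Module.End.mul_apply, ih (T x), h]

lemma shift_kill (m : ℕ) (u : Fin (m + 1) → V) (T : Module.End K V)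
    (hrec : ∀ i : Fin m, T (u i.castSucc) = u i.succ) (hlast : T (u (Fin.last m)) = 0) :
    ∀ (j : ℕ) (i : Fin (m + 1)), m + 1 ≤ (i : ℕ) + j → (T ^ j) (u i) = 0 := by
  intro j
  induction j with
  | zero => intro i hi; exact absurd hi (by omega)
  | succ j ih =>
    intro i hi
    rw [pow_succ, Module.End.mul_apply]
    rcases eq_or_lt_of_le (Nat.le_of_lt_succ i.isLt) with h | h
    · have hil : i = Fin.last m := Fin.ext h
      rw [hil, hlast, map_zero]
    · have hi' : (i : ℕ) < m := h
      have hTu : T (u i) = u (⟨i, hi'⟩ : Fin m).succ := by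
        have hcs : u i = u ((⟨i, hi'⟩ : Fin m).castSucc) := congrArg u (Fin.ext rfl)
        rw [hcs, hrec]
      rw [hTu]
      refine ih _ ?_
      simp only [Fin.val_succ]
      omega

/-- If `T` is nilpotent and acts as a shift on an independent family except possibly
the last vector, whose image lies in the span, then the image of the last vector is `0`. -/
lemma key_F (m : ℕ) : ∀ (u : Fin (m + 1) → V), LinearIndependent K u →
    ∀ (T : Module.End K V), IsNilpotent T →
    (∀ i : Fin m, T (u i.castSucc) = u i.succ) →
    T (u (Fin.last m)) ∈ span K (range u) → T (u (Fin.last m)) = 0 := by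
  induction m with
  | zero =>
    intro u hu T hT _ hmem
    obtain ⟨c, hc⟩ := (mem_span_range_iff_exists_fun K).mp hmem
    rw [Fin.sum_univ_one] at hc
    obtain ⟨N, hN⟩ := hT
    by_cases h0 : c 0 = 0
    · rw [← hc, h0, zero_smul]
    · exfalso
      have hc' : T (u 0) = c 0 • u 0 := hc.symm
      have hpow : ∀ j : ℕ, (T ^ j) (u 0) = (c 0) ^ j • u 0 := by
        intro j
        induction j with
        | zero => simp
        | succ j ih =>
          rw [pow_succ, Module.End.mul_apply, hc', map_smul, ih, smul_smul, pow_succ, mul_comm]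
      have := hpow N
      rw [hN] at this
      have hne := hu.ne_zero 0
      simp only [LinearMap.zero_apply] at this
      exact hne (by
        have : (c 0) ^ N • u 0 = 0 := this.symm
        have hcn : (c 0) ^ N ≠ 0 := pow_ne_zero _ h0
        exact (smul_eq_zero.mp this).resolve_left hcn)
  | succ m IH =>
    intro u hu T hT hrec hmem
    obtain ⟨c, hc⟩ := (mem_span_range_iff_exists_fun K).mp hmem
    set Z : Submodule K V := span K (range u) with hZ
    -- first, c 0 = 0
    have hc0 : c 0 = 0 := by
      by_contra h0
      -- Z ≤ map T Z
      have hstep : Z ≤ Submodule.map T Z := by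
        rw [hZ, Submodule.span_le]
        rintro _ ⟨i, rfl⟩
        induction i using Fin.cases with
        | zero =>
          -- u 0 = T ((c 0)⁻¹ • w)
          set w : V := u (Fin.last (m + 1)) - ∑ j : Fin (m + 1), c j.succ • u j.castSucc with hw
          have hwZ : w ∈ Z := by
            apply Z.sub_mem
            · exact subset_span (mem_range_self _)
            · exact Submodule.sum_mem _ fun j _ =>
                Z.smul_mem _ (subset_span (mem_range_self _))
          have hTw : T w = c 0 • u 0 := by
            rw [hw, map_sub, map_sum]
            have hterm : ∀ j : Fin (m + 1), T (c j.succ • u j.castSucc) = c j.succ • u j.succ := by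
              intro j; rw [map_smul, hrec]
            simp only [hterm]
            rw [← hc, Fin.sum_univ_succ]
            abel
          refine ⟨(c 0)⁻¹ • w, Z.smul_mem _ hwZ, ?_⟩
          rw [map_smul, hTw, smul_smul, inv_mul_cancel₀ h0, one_smul]
        | succ j =>
          exact ⟨u j.castSucc, subset_span (mem_range_self _), hrec j⟩
      have hiter : ∀ N : ℕ, Z ≤ Submodule.map (T ^ N : Module.End K V) Z := by
        intro N
        induction N with
        | zero => intro x hx; simpa using hx
        | succ N ihN =>
          calc Z ≤ Submodule.map T Z := hstep
          _ ≤ Submodule.map T (Submodule.map (T ^ N : Module.End K V) Z) :=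
              Submodule.map_mono ihN
          _ = Submodule.map (T ^ (N + 1) : Module.End K V) Z := by
              rw [← Submodule.map_comp]
              congr 1
              rw [pow_succ']
              rfl
      obtain ⟨N, hN⟩ := hT
      have h0mem : u 0 ∈ Submodule.map (T ^ N : Module.End K V) Z :=
        hiter N (subset_span (mem_range_self 0))
      rw [hN] at h0mem
      obtain ⟨y, -, hy⟩ := h0mem
      exact hu.ne_zero 0 (by simpa using hy.symm)
    -- now apply IH to u ∘ Fin.succ
    have hu' : LinearIndependent K (u ∘ Fin.succ) := hu.comp Fin.succ (Fin.succ_injective _)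
    have hrec' : ∀ i : Fin m, T ((u ∘ Fin.succ) i.castSucc) = (u ∘ Fin.succ) i.succ := by
      intro i
      have h1 : Fin.succ i.castSucc = Fin.castSucc i.succ := by
        ext; simp
      simp only [Function.comp_apply, h1]
      rw [hrec i.succ]
    have hmem' : T ((u ∘ Fin.succ) (Fin.last m)) ∈ span K (range (u ∘ Fin.succ)) := by
      have h1 : (u ∘ Fin.succ) (Fin.last m) = u (Fin.last (m + 1)) := by
        simp [Fin.succ_last]
      rw [h1, ← hc, Fin.sum_univ_succ, hc0, zero_smul, zero_add]
      exact Submodule.sum_mem _ fun j _ =>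
        Submodule.smul_mem _ _ (subset_span (mem_range_self (f := u ∘ Fin.succ) j))
    have := IH (u ∘ Fin.succ) hu' T hT hrec' hmem'
    have h1 : (u ∘ Fin.succ) (Fin.last m) = u (Fin.last (m + 1)) := by
      simp [Fin.succ_last]
    rwa [h1] at this


section Fiber


variable {m : ℕ} {u : Fin (m + 1) → V} {C : Submodule K V}

/-- The fiber of endomorphisms with prescribed shift behaviour on an independent family. -/
noncomputable def fiberEndEquiv (hu : LinearIndependent K u)
    (hc : IsCompl (span K (range u)) C) :
    {T : Module.End K V // (∀ i : Fin m, T (u i.castSucc) = u i.succ) ∧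
      T (u (Fin.last m)) ∈ span K (range u)} ≃ (span K (range u)) × (C →ₗ[K] V) := by
  set Z := span K (range u) with hZdef
  have humem : ∀ i, u i ∈ Z := fun i => subset_span (mem_range_self i)
  set bu : Module.Basis (Fin (m + 1)) K Z := Module.Basis.span hu with hbu
  have hbu_coe : ∀ i, (bu i : V) = u i := fun i => congrArg Subtype.val (Module.Basis.span_apply hu i)
  set projZ : V →ₗ[K] Z := Z.projectionOnto C hc with hprojZ
  set projC : V →ₗ[K] C := C.projectionOnto Z hc.symm with hprojC
  have hprojZ_u : ∀ i, projZ (u i) = bu i := by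
    intro i
    have h1 : ((⟨u i, humem i⟩ : Z) : V) = u i := rfl
    have h2 : (⟨u i, humem i⟩ : Z) = bu i := Subtype.ext (hbu_coe i).symm
    rw [← h1, Submodule.projectionOnto_apply_left hc, h2]
  have hprojC_u : ∀ i, projC (u i) = 0 := fun i =>
    Submodule.projectionOnto_apply_of_mem_right hc.symm (humem i)
  refine
  { toFun := fun T => (⟨T.1 (u (Fin.last m)), T.2.2⟩, T.1 ∘ₗ C.subtype)
    invFun := fun p =>
      ⟨(bu.constr K (Fin.lastCases ((p.1 : V)) (fun j => u j.succ))) ∘ₗ projZ + p.2 ∘ₗ projC,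
        ?_, ?_⟩
    left_inv := ?_
    right_inv := ?_ }
  · -- shift conditions
    intro i
    simp only [LinearMap.add_apply, LinearMap.comp_apply, hprojZ_u, hprojC_u, map_zero,
      add_zero, Module.Basis.constr_basis, Fin.lastCases_castSucc]
  · simp only [LinearMap.add_apply, LinearMap.comp_apply, hprojZ_u, hprojC_u, map_zero,
      add_zero, Module.Basis.constr_basis, Fin.lastCases_last]
    exact p.1.2
  · -- left inverse
    rintro ⟨T, hrec, hlast⟩
    apply Subtype.ext
    have hagree : ∀ z : Z, (bu.constr K
        (Fin.lastCases ((T (u (Fin.last m)))) (fun j => u j.succ))) z = T (z : V) := by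
      have hext : (bu.constr K
          (Fin.lastCases ((T (u (Fin.last m)))) (fun j => u j.succ))) = T ∘ₗ Z.subtype := by
        apply bu.ext
        intro i
        induction i using Fin.lastCases with
        | last => simp [Module.Basis.constr_basis, hbu_coe, Submodule.subtype_apply]
        | cast j => simp [Module.Basis.constr_basis, hbu_coe, hrec j, Submodule.subtype_apply]
      intro z
      rw [hext]
      rfl
    ext x
    simp only [LinearMap.add_apply, LinearMap.comp_apply]
    rw [hagree]
    conv_rhs => rw [← Submodule.projection_add_projection_eq_self hc x]
    rw [map_add]
    rfl
  · -- right inverse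
    rintro ⟨z, h⟩
    refine Prod.ext ?_ ?_
    · apply Subtype.ext
      simp only [LinearMap.add_apply, LinearMap.comp_apply, hprojZ_u, hprojC_u, map_zero,
        add_zero, Module.Basis.constr_basis, Fin.lastCases_last]
    · ext c
      simp only [LinearMap.add_apply, LinearMap.comp_apply, Submodule.subtype_apply]
      have h1 : projZ ((c : V)) = 0 :=
        Submodule.projectionOnto_apply_of_mem_right hc c.2
      have h2 : projC ((c : V)) = c :=
        Submodule.projectionOnto_apply_left hc.symm c
      rw [h1, h2, map_zero, zero_add]


/-- The nilpotent fiber equivalence. -/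
noncomputable def fiberNilEquiv (hu : LinearIndependent K u)
    (hc : IsCompl (span K (range u)) C) :
    {T : Module.End K V // (∀ i : Fin m, T (u i.castSucc) = u i.succ) ∧
      T (u (Fin.last m)) = 0 ∧ IsNilpotent T} ≃
      (C →ₗ[K] (span K (range u))) ×
        {S : Module.End K (V ⧸ (span K (range u))) // IsNilpotent S} := by
  set Z := span K (range u) with hZdef
  have humem : ∀ i, u i ∈ Z := fun i => subset_span (mem_range_self i)
  set bu : Module.Basis (Fin (m + 1)) K Z := Module.Basis.span hu with hbu
  have hbu_coe : ∀ i, (bu i : V) = u i := fun i => congrArg Subtype.val (Module.Basis.span_apply hu i)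
  set projZ : V →ₗ[K] Z := Z.projectionOnto C hc with hprojZ
  set projC : V →ₗ[K] C := C.projectionOnto Z hc.symm with hprojC
  have hprojZ_u : ∀ i, projZ (u i) = bu i := by
    intro i
    have h1 : ((⟨u i, humem i⟩ : Z) : V) = u i := rfl
    have h2 : (⟨u i, humem i⟩ : Z) = bu i := Subtype.ext (hbu_coe i).symm
    rw [← h1, Submodule.projectionOnto_apply_left hc, h2]
  have hprojC_u : ∀ i, projC (u i) = 0 := fun i =>
    Submodule.projectionOnto_apply_of_mem_right hc.symm (humem i)
  have hdecomp : ∀ x : V, ((projZ x : V)) + ((projC x : V)) = x := fun x =>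
    Submodule.projection_add_projection_eq_self hc x
  set qe : (V ⧸ Z) ≃ₗ[K] C := Z.quotientEquivOfIsCompl C hc with hqe
  have hmkQ_zero : ∀ z : Z, Z.mkQ ((z : V)) = 0 := by
    intro z
    rw [Submodule.mkQ_apply]
    exact (Submodule.Quotient.mk_eq_zero Z).mpr z.2
  have hmk_qe : ∀ y : V ⧸ Z, Z.mkQ ((qe y : V)) = y := by
    intro y
    rw [Submodule.mkQ_apply, hqe]
    exact Submodule.mk_quotientEquivOfIsCompl_apply hc y
  have hmkQ_projC : ∀ x : V, Z.mkQ ((projC x : V)) = Z.mkQ x := by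
    intro x
    conv_rhs => rw [← hdecomp x]
    rw [map_add, hmkQ_zero, zero_add]
  have hqe_mk : ∀ c : C, qe (Z.mkQ ((c : V))) = c := by
    intro c
    rw [Submodule.mkQ_apply, hqe]
    exact Submodule.quotientEquivOfIsCompl_apply_mk_coe hc c
  have hqe_proj : ∀ x : V, qe (Z.mkQ x) = projC x := by
    intro x
    rw [← hmkQ_projC x, hqe_mk]
  set shiftg : Z →ₗ[K] Z := bu.constr K (Fin.lastCases (0 : Z) (fun j => bu j.succ))
    with hshiftg
  -- the inverse map construction
  set Tmap : (C →ₗ[K] Z) → (Module.End K (V ⧸ Z)) → Module.End K V := fun h S =>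
    Z.subtype ∘ₗ shiftg ∘ₗ projZ + Z.subtype ∘ₗ h ∘ₗ projC +
      C.subtype ∘ₗ (qe.toLinearMap ∘ₗ (S ∘ₗ (Z.mkQ ∘ₗ (C.subtype ∘ₗ projC)))) with hTmapdef
  have hTmap : ∀ h S x, Tmap h S x =
      ((shiftg (projZ x) : V)) + ((h (projC x) : V)) + ((qe (S (Z.mkQ ((projC x : V)))) : V)) := by
    intro h S x
    simp only [hTmapdef, LinearMap.add_apply, LinearMap.comp_apply, Submodule.subtype_apply,
      LinearEquiv.coe_coe]
  have hTmap_rec : ∀ h S, (∀ i : Fin m, (Tmap h S) (u i.castSucc) = u i.succ) ∧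
      (Tmap h S) (u (Fin.last m)) = 0 := by
    intro h S
    constructor
    · intro i
      rw [hTmap, hprojZ_u, hprojC_u]
      simp [hshiftg, Module.Basis.constr_basis, Fin.lastCases_castSucc, hbu_coe]
    · rw [hTmap, hprojZ_u, hprojC_u]
      simp [hshiftg, Module.Basis.constr_basis, Fin.lastCases_last]
  have hTmap_comm : ∀ h S x, Z.mkQ ((Tmap h S) x) = S (Z.mkQ x) := by
    intro h S x
    rw [hTmap, map_add, map_add, hmkQ_zero, hmkQ_zero, hmk_qe, hmkQ_projC, zero_add, zero_add]
  have hTmap_nil : ∀ h S, IsNilpotent S → IsNilpotent (Tmap h S) := by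
    intro h S hS
    obtain ⟨N, hN⟩ := hS
    refine ⟨(m + 1) + N, pow_glue (Tmap h S) Z N (m + 1) ?_ ?_⟩
    · intro x
      have := quot_comm (Tmap h S) Z S (hTmap_comm h S) N x
      rw [hN] at this
      simp only [LinearMap.zero_apply] at this
      rw [Submodule.mkQ_apply] at this
      exact (Submodule.Quotient.mk_eq_zero Z).mp this
    · intro z hz
      have hker : Z ≤ LinearMap.ker ((Tmap h S) ^ (m + 1)) := by
        rw [hZdef, span_le]
        rintro _ ⟨i, rfl⟩
        exact shift_kill m u (Tmap h S) (hTmap_rec h S).1 (hTmap_rec h S).2 (m + 1) i (by omega)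
      exact hker hz
  -- forward data for a fiber element
  have hTZ : ∀ (T : Module.End K V), (∀ i : Fin m, T (u i.castSucc) = u i.succ) →
      T (u (Fin.last m)) = 0 → ∀ z ∈ Z, T z ∈ Z := by
    intro T hrec hlast z hz
    have hmap : Submodule.map T Z ≤ Z := by
      conv_lhs => rw [hZdef]
      rw [Submodule.map_span, span_le]
      rintro _ ⟨_, ⟨i, rfl⟩, rfl⟩
      induction i using Fin.lastCases with
      | last => rw [hlast]; exact Z.zero_mem
      | cast j => rw [hrec j]; exact humem _
    exact hmap ⟨z, hz, rfl⟩
  have hT_comm : ∀ (T : Module.End K V), (∀ i : Fin m, T (u i.castSucc) = u i.succ) →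
      T (u (Fin.last m)) = 0 → ∀ x,
      Z.mkQ (T x) = ((Z.mkQ ∘ₗ T ∘ₗ C.subtype) ∘ₗ (qe : (V ⧸ Z) →ₗ[K] C)) (Z.mkQ x) := by
    intro T hrec hlast x
    simp only [LinearMap.comp_apply, LinearEquiv.coe_coe, Submodule.subtype_apply]
    rw [hqe_proj x]
    conv_lhs => rw [← hdecomp x]
    rw [map_add, map_add]
    have h1 : T ((projZ x : V)) ∈ Z := hTZ T hrec hlast _ (projZ x).2
    rw [show Z.mkQ (T ((projZ x : V))) = 0 from hmkQ_zero ⟨_, h1⟩, zero_add]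
  refine
  { toFun := fun T => (projZ ∘ₗ T.1 ∘ₗ C.subtype,
      ⟨(Z.mkQ ∘ₗ T.1 ∘ₗ C.subtype) ∘ₗ (qe : (V ⧸ Z) →ₗ[K] C), ?_⟩)
    invFun := fun p => ⟨Tmap p.1 p.2.1, (hTmap_rec p.1 p.2.1).1, (hTmap_rec p.1 p.2.1).2,
      hTmap_nil p.1 p.2.1 p.2.2⟩
    left_inv := ?_
    right_inv := ?_ }
  · -- nilpotency of induced map on quotient
    obtain ⟨T, hrec, hlast, hnil⟩ := T
    obtain ⟨N, hN⟩ := hnil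
    refine ⟨N, ?_⟩
    apply LinearMap.ext
    intro y
    obtain ⟨x, rfl⟩ := Z.mkQ_surjective y
    have := quot_comm T Z _ (hT_comm T hrec hlast) N x
    rw [hN] at this
    simp only [LinearMap.zero_apply, map_zero] at this ⊢
    exact this.symm
  · -- left inverse
    rintro ⟨T, hrec, hlast, hnil⟩
    apply Subtype.ext
    dsimp only
    have hshift_agree : ∀ z : Z, ((shiftg z : V)) = T ((z : V)) := by
      have hext : Z.subtype ∘ₗ shiftg = T ∘ₗ Z.subtype := by
        apply bu.ext
        intro i
        induction i using Fin.lastCases with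
        | last =>
          simp only [LinearMap.comp_apply, Submodule.subtype_apply, hshiftg,
            Module.Basis.constr_basis, Fin.lastCases_last, hbu_coe, hlast, Submodule.coe_zero]
        | cast j =>
          simp only [LinearMap.comp_apply, Submodule.subtype_apply, hshiftg,
            Module.Basis.constr_basis, Fin.lastCases_castSucc, hbu_coe, hrec j]
      intro z
      exact DFunLike.congr_fun hext z
    ext x
    rw [hTmap]
    simp only [LinearMap.comp_apply, Submodule.subtype_apply, LinearEquiv.coe_coe]
    rw [hshift_agree, hqe_proj]
    have hqp : qe (Z.mkQ ((projC x : V))) = projC ((projC x : V)) := hqe_proj _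
    have hpp : projC ((projC x : V)) = projC x :=
      Submodule.projectionOnto_apply_left hc.symm (projC x)
    rw [hqp, hpp] at *
    have ht23 : ((projZ (T ((projC x : V))) : V)) + ((projC (T ((projC x : V))) : V))
        = T ((projC x : V)) := hdecomp _
    rw [add_assoc, ht23]
    conv_rhs => rw [← hdecomp x, map_add]
  · -- right inverse
    rintro ⟨h, S, hS⟩
    refine Prod.ext ?_ ?_
    · dsimp only
      apply LinearMap.ext
      intro c
      apply Subtype.ext
      simp only [LinearMap.comp_apply, Submodule.subtype_apply]
      rw [hTmap]
      have h1 : projZ ((c : V)) = 0 :=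
        Submodule.projectionOnto_apply_of_mem_right hc c.2
      have h2 : projC ((c : V)) = c :=
        Submodule.projectionOnto_apply_left hc.symm c
      rw [h1, h2, map_zero]
      rw [map_add, map_add]
      have h3 : projZ (((h c) : V)) = h c :=
        Submodule.projectionOnto_apply_left hc (h c)
      have h4 : projZ ((qe (S (Z.mkQ ((c : V)))) : V)) = 0 :=
        Submodule.projectionOnto_apply_of_mem_right hc (qe _).2
      rw [h3, h4]
      simp
    · apply Subtype.ext
      dsimp only
      apply LinearMap.ext
      intro y
      simp only [LinearMap.comp_apply, Submodule.subtype_apply, LinearEquiv.coe_coe]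
      rw [hTmap]
      have h1 : projZ (((qe y) : V)) = 0 :=
        Submodule.projectionOnto_apply_of_mem_right hc (qe y).2
      have h2 : projC (((qe y) : V)) = qe y :=
        Submodule.projectionOnto_apply_left hc.symm (qe y)
      rw [h1, h2, map_zero, map_add, map_add, hmkQ_zero, hmkQ_zero, hmk_qe, hmk_qe]
      simp

end Fiber

section Krylov

variable [FiniteDimensional K V]

/-- Krylov subspace of order `j`. -/
def Sj (T : Module.End K V) (e : V) (j : ℕ) : Submodule K V :=
  span K (range fun i : Fin j => (T ^ (i : ℕ)) e)

lemma krylov_indep (T : Module.End K V) (e : V) (mm : ℕ)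
    (h : ∀ j < mm, (T ^ j) e ∉ Sj T e j) :
    LinearIndependent K fun i : Fin mm => (T ^ (i : ℕ)) e := by
  induction mm with
  | zero => exact linearIndependent_empty_type
  | succ mm ih =>
    have hsnoc : (fun i : Fin (mm + 1) => (T ^ (i : ℕ)) e) =
        Fin.snoc (fun i : Fin mm => (T ^ (i : ℕ)) e) ((T ^ mm) e) := by
      funext i
      induction i using Fin.lastCases with
      | last => simp
      | cast j => simp
    rw [hsnoc]
    exact linearIndependent_fin_snoc.mpr ⟨ih (fun j hj => h j (by omega)), h mm (by omega)⟩

lemma krylov_exists (T : Module.End K V) (e : V) : ∃ j, (T ^ j) e ∈ Sj T e j := by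
  by_contra hcon
  push_neg at hcon
  have hind := krylov_indep T e (Module.finrank K V + 1) (fun j _ => hcon j)
  have hle := hind.fintype_card_le_finrank
  rw [Fintype.card_fin] at hle
  omega

/-- The Krylov degree. -/
noncomputable def kd (T : Module.End K V) (e : V) : ℕ := sInf {j | (T ^ j) e ∈ Sj T e j}

lemma kd_mem (T : Module.End K V) (e : V) : (T ^ kd T e) e ∈ Sj T e (kd T e) :=
  Nat.sInf_mem (krylov_exists T e)

lemma kd_min (T : Module.End K V) (e : V) {j : ℕ} (h : j < kd T e) :
    (T ^ j) e ∉ Sj T e j :=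
  Nat.notMem_of_lt_sInf h

lemma kd_indep (T : Module.End K V) (e : V) :
    LinearIndependent K fun i : Fin (kd T e) => (T ^ (i : ℕ)) e :=
  krylov_indep T e _ (fun _ hj => kd_min T e hj)

lemma kd_pos (T : Module.End K V) {e : V} (he : e ≠ 0) : 0 < kd T e := by
  rcases Nat.eq_zero_or_pos (kd T e) with h | h
  · exfalso
    have hmem := kd_mem T e
    rw [h] at hmem
    have : Sj T e 0 = ⊥ := by
      rw [Sj]
      have : (range fun i : Fin 0 => (T ^ (i : ℕ)) e) = (∅ : Set V) := by
        simp
      rw [this, span_empty]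
    rw [this] at hmem
    simp only [pow_zero, Submodule.mem_bot] at hmem
    exact he (by simpa using hmem)
  · exact h

lemma kd_le (T : Module.End K V) (e : V) : kd T e ≤ Module.finrank K V := by
  have hle := (kd_indep T e).fintype_card_le_finrank
  rwa [Fintype.card_fin] at hle

/-- The fiber characterization. -/
lemma tau_fiber_iff (T₀ T : Module.End K V) (e : V) (m : ℕ) (hm : kd T₀ e = m + 1) :
    (kd T e = m + 1 ∧ ∀ i : ℕ, i < m + 1 → (T ^ i) e = (T₀ ^ i) e) ↔
      ((∀ i : Fin m, T ((fun i : Fin (m + 1) => (T₀ ^ (i : ℕ)) e) i.castSucc)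
          = (fun i : Fin (m + 1) => (T₀ ^ (i : ℕ)) e) i.succ) ∧
        T ((fun i : Fin (m + 1) => (T₀ ^ (i : ℕ)) e) (Fin.last m))
          ∈ span K (range (fun i : Fin (m + 1) => (T₀ ^ (i : ℕ)) e))) := by
  set u : Fin (m + 1) → V := fun i => (T₀ ^ (i : ℕ)) e with hudef
  have hspan : span K (range u) = Sj T₀ e (m + 1) := rfl
  constructor
  · rintro ⟨hkd, hag⟩
    have hSj : Sj T e (m + 1) = Sj T₀ e (m + 1) := by
      rw [Sj, Sj]
      congr 1
      ext x
      constructor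
      · rintro ⟨i, rfl⟩; exact ⟨i, (hag i i.isLt).symm⟩
      · rintro ⟨i, rfl⟩; exact ⟨i, hag i i.isLt⟩
    constructor
    · intro i
      have h1 : u i.castSucc = (T ^ (i : ℕ)) e := by
        rw [hudef]; exact (hag i (by omega)).symm
      have h2 : u i.succ = (T₀ ^ ((i : ℕ) + 1)) e := by
        rw [hudef]; simp
      rw [h1, h2, ← hag ((i : ℕ) + 1) (by omega), pow_succ', Module.End.mul_apply]
    · have h1 : u (Fin.last m) = (T ^ m) e := by
        rw [hudef]; exact (hag m (by omega)).symm
      rw [h1, hspan, ← hSj]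
      have : T ((T ^ m) e) = (T ^ (m + 1)) e := by
        rw [pow_succ', Module.End.mul_apply]
      rw [this, ← hkd]
      exact kd_mem T e
  · rintro ⟨hrec, hlast⟩
    have hag : ∀ i : ℕ, i < m + 1 → (T ^ i) e = (T₀ ^ i) e := by
      intro i
      induction i with
      | zero => intro _; simp
      | succ i ih =>
        intro hi
        have hii : i < m := by omega
        have h1 : (T ^ (i + 1)) e = T ((T ^ i) e) := by
          rw [pow_succ', Module.End.mul_apply]
        have h2 : u (Fin.castSucc ⟨i, hii⟩) = (T₀ ^ i) e := rfl
        have h3 : u (Fin.succ ⟨i, hii⟩) = (T₀ ^ (i + 1)) e := rfl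
        rw [h1, ih (by omega), ← h2, hrec ⟨i, hii⟩, h3]
    have hSj : ∀ j : ℕ, j ≤ m + 1 → Sj T e j = Sj T₀ e j := by
      intro j hj
      rw [Sj, Sj]
      congr 1
      ext x
      constructor
      · rintro ⟨i, rfl⟩; exact ⟨i, (hag i (by omega)).symm⟩
      · rintro ⟨i, rfl⟩; exact ⟨i, hag i (by omega)⟩
    refine ⟨?_, hag⟩
    have hle : kd T e ≤ m + 1 := by
      apply Nat.sInf_le
      show (T ^ (m + 1)) e ∈ Sj T e (m + 1)
      rw [hSj (m + 1) le_rfl]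
      have h1 : (T ^ (m + 1)) e = T (u (Fin.last m)) := by
        have : u (Fin.last m) = (T ^ m) e := (hag m (by omega)).symm
        rw [this, pow_succ', Module.End.mul_apply]
      rw [h1, ← hspan]
      exact hlast
    have hge : m + 1 ≤ kd T e := by
      by_contra hcon
      push_neg at hcon
      have hmem := kd_mem T e
      rw [hag _ (by omega), hSj _ (by omega)] at hmem
      exact kd_min T₀ e (by omega : kd T e < kd T₀ e) hmem
    omega

end Krylov

lemma card_double {α γ β : Type*} [Finite α] [Finite γ] [Finite β] (f : α → β) (g : γ → β)
    (M : ℕ) (h : ∀ b, Nat.card {a // f a = b} = M * Nat.card {c // g c = b}) :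
    Nat.card α = M * Nat.card γ := by
  classical
  cases nonempty_fintype β
  have hα : Nat.card α = ∑ b : β, Nat.card {a // f a = b} := by
    rw [← Nat.card_congr (Equiv.sigmaFiberEquiv f)]
    letI : ∀ b : β, Fintype {a // f a = b} := fun b => Fintype.ofFinite _
    rw [Nat.card_eq_fintype_card, Fintype.card_sigma]
    apply Finset.sum_congr rfl
    intro b _
    rw [Nat.card_eq_fintype_card]
  have hγ : Nat.card γ = ∑ b : β, Nat.card {c // g c = b} := by
    rw [← Nat.card_congr (Equiv.sigmaFiberEquiv g)]
    letI : ∀ b : β, Fintype {c // g c = b} := fun b => Fintype.ofFinite _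
    rw [Nat.card_eq_fintype_card, Fintype.card_sigma]
    apply Finset.sum_congr rfl
    intro b _
    rw [Nat.card_eq_fintype_card]
  rw [hα, hγ, Finset.mul_sum]
  exact Finset.sum_congr rfl fun b _ => h b

theorem key (K : Type u) [Field K] :
    ∀ (n : ℕ) (V : Type v) [AddCommGroup V] [Module K V] [Finite V],
      Module.finrank K V = n →
      Nat.card V * Nat.card {T : Module.End K V // IsNilpotent T}
        = Nat.card (Module.End K V) := by
  intro n
  induction n using Nat.strong_induction_on with
  | _ n IH =>
  intro V _ _ _ hrank
  haveI : Finite (Module.End K V) :=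
    Finite.of_injective (fun f => (f : V → V)) DFunLike.coe_injective
  rcases n with _ | n'
  · -- trivial space
    haveI hs : Subsingleton V := Module.finrank_zero_iff.mp hrank
    haveI : Subsingleton (Module.End K V) :=
      ⟨fun f g => LinearMap.ext fun x => Subsingleton.elim _ _⟩
    have h1 : Nat.card V = 1 :=
      Nat.card_eq_one_iff_unique.mpr ⟨hs, ⟨0⟩⟩
    have h2 : Nat.card (Module.End K V) = 1 :=
      Nat.card_eq_one_iff_unique.mpr ⟨inferInstance, ⟨0⟩⟩
    have h3 : Nat.card {T : Module.End K V // IsNilpotent T} = 1 :=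
      Nat.card_eq_one_iff_unique.mpr ⟨inferInstance, ⟨⟨0, IsNilpotent.zero⟩⟩⟩
    rw [h1, h2, h3]
  · -- inductive step
    have hfr : 0 < Module.finrank K V := by omega
    haveI : Nontrivial V := Module.finrank_pos_iff.mp hfr
    obtain ⟨e, he⟩ := exists_ne (0 : V)
    set τ : Module.End K V → Fin (n' + 2) × (Fin (n' + 1) → V) := fun T =>
      (⟨kd T e, by have := kd_le T e; omega⟩,
        fun i => if (i : ℕ) < kd T e then (T ^ (i : ℕ)) e else 0) with hτ
    refine (card_double τ (fun T : {T : Module.End K V // IsNilpotent T} => τ T.1)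
      (Nat.card V) ?_).symm
    intro b
    by_cases hb : ∃ T₀ : Module.End K V, τ T₀ = b
    swap
    · haveI h1 : IsEmpty {T : Module.End K V // τ T = b} := ⟨fun T => hb ⟨T.1, T.2⟩⟩
      haveI h2 : IsEmpty {T : {T : Module.End K V // IsNilpotent T} // τ T.1 = b} :=
        ⟨fun T => hb ⟨T.1.1, T.2⟩⟩
      have hz1 : Nat.card {T : Module.End K V // τ T = b} = 0 := Nat.card_of_isEmpty
      have hz2 : Nat.card {T : {T : Module.End K V // IsNilpotent T} // τ T.1 = b} = 0 :=
        Nat.card_of_isEmpty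
      rw [hz1, hz2, mul_zero]
    obtain ⟨T₀, rfl⟩ := hb
    obtain ⟨m, hm⟩ : ∃ m, kd T₀ e = m + 1 :=
      ⟨kd T₀ e - 1, by have := kd_pos T₀ he; omega⟩
    set u : Fin (m + 1) → V := fun i => (T₀ ^ (i : ℕ)) e with hu_def
    have hu : LinearIndependent K u := by
      have h := kd_indep T₀ e
      rw [hm] at h
      exact h
    set Z : Submodule K V := span K (range u) with hZ
    have hmn : m + 1 ≤ n' + 1 := by
      have := kd_le T₀ e; omega
    -- fiber characterization
    have hiff : ∀ T : Module.End K V, τ T = τ T₀ ↔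
        ((∀ i : Fin m, T (u i.castSucc) = u i.succ) ∧ T (u (Fin.last m)) ∈ Z) := by
      intro T
      rw [← tau_fiber_iff T₀ T e m hm]
      constructor
      · intro h
        have h1 := congrArg (fun p => ((p.1 : Fin (n' + 2)) : ℕ)) h
        simp only [hτ] at h1
        rw [hm] at h1
        refine ⟨h1, ?_⟩
        intro i hi
        have h3 := congrFun (congrArg Prod.snd h) ⟨i, by omega⟩
        simp only [hτ] at h3
        rw [if_pos (show ((⟨i, by omega⟩ : Fin (n' + 1)) : ℕ) < kd T e by
              simp only [Fin.val_mk]; omega),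
            if_pos (show ((⟨i, by omega⟩ : Fin (n' + 1)) : ℕ) < kd T₀ e by
              simp only [Fin.val_mk]; omega)] at h3
        exact h3
      · rintro ⟨hfst, hag⟩
        refine Prod.ext ?_ ?_
        · apply Fin.ext
          simp only [hτ]
          rw [hfst, hm]
        · funext i
          simp only [hτ]
          rw [hfst, hm]
          by_cases hi : (i : ℕ) < m + 1
          · rw [if_pos hi, if_pos hi]
            exact hag i hi
          · rw [if_neg hi, if_neg hi]
    obtain ⟨C, hc⟩ := Submodule.exists_isCompl Z
    haveI : Finite (V ⧸ Z) := Finite.of_surjective _ (Submodule.mkQ_surjective Z)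
    haveI : Finite (C →ₗ[K] V) :=
      Finite.of_injective (fun f => (f : C → V)) DFunLike.coe_injective
    haveI : Finite (C →ₗ[K] Z) :=
      Finite.of_injective (fun f => (f : C → Z)) DFunLike.coe_injective
    haveI : Finite (Module.End K (V ⧸ Z)) :=
      Finite.of_injective (fun f => (f : (V ⧸ Z) → (V ⧸ Z))) DFunLike.coe_injective
    have hEnd : Nat.card {T : Module.End K V // τ T = τ T₀}
        = Nat.card Z * Nat.card (C →ₗ[K] V) := by
      rw [Nat.card_congr ((Equiv.subtypeEquivRight hiff).trans (fiberEndEquiv hu hc)),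
        Nat.card_prod]
    have hNil0 : ∀ T : Module.End K V, (τ T = τ T₀ ∧ IsNilpotent T) ↔
        ((∀ i : Fin m, T (u i.castSucc) = u i.succ) ∧
          T (u (Fin.last m)) = 0 ∧ IsNilpotent T) := by
      intro T
      constructor
      · rintro ⟨h1, h2⟩
        obtain ⟨hrec, hmem⟩ := (hiff T).mp h1
        exact ⟨hrec, key_F m u hu T h2 hrec hmem, h2⟩
      · rintro ⟨hrec, hlast, h2⟩
        exact ⟨(hiff T).mpr ⟨hrec, by rw [hlast]; exact Z.zero_mem⟩, h2⟩
    have eqNil : {T : {T : Module.End K V // IsNilpotent T} // τ T.1 = τ T₀} ≃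
        {T : Module.End K V // (∀ i : Fin m, T (u i.castSucc) = u i.succ) ∧
          T (u (Fin.last m)) = 0 ∧ IsNilpotent T} := by
      refine Equiv.trans ?_ (Equiv.subtypeEquivRight hNil0)
      exact { toFun := fun T => ⟨T.1.1, T.2, T.1.2⟩
              invFun := fun T => ⟨⟨T.1, T.2.2⟩, T.2.1⟩
              left_inv := fun T => rfl
              right_inv := fun T => rfl }
    have hNil : Nat.card {T : {T : Module.End K V // IsNilpotent T} // τ T.1 = τ T₀}
        = Nat.card (C →ₗ[K] Z) * Nat.card {S : Module.End K (V ⧸ Z) // IsNilpotent S} := by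
      rw [Nat.card_congr (eqNil.trans (fiberNilEquiv hu hc)), Nat.card_prod]
    have hrkZ : Module.finrank K Z = m + 1 := by
      rw [hZ, finrank_span_eq_card hu, Fintype.card_fin]
    have hrkQ : Module.finrank K (V ⧸ Z) = n' + 1 - (m + 1) := by
      have h := Submodule.finrank_quotient_add_finrank Z
      rw [hrkZ, hrank] at h
      omega
    have hIH := IH (n' + 1 - (m + 1)) (by omega) (V ⧸ Z) hrkQ
    have hsplit : Nat.card (C →ₗ[K] V)
        = Nat.card (C →ₗ[K] Z) * Nat.card (Module.End K (V ⧸ Z)) := by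
      have e1 : (C →ₗ[K] V) ≃ ((C →ₗ[K] Z) × (C →ₗ[K] C)) :=
        ((LinearEquiv.arrowCongr (LinearEquiv.refl K C)
          (prodEquivOfIsCompl Z C hc).symm).toEquiv.trans
            (LinearMap.prodEquiv K).symm.toEquiv)
      have e2 : (C →ₗ[K] C) ≃ Module.End K (V ⧸ Z) :=
        (LinearEquiv.arrowCongr (Z.quotientEquivOfIsCompl C hc).symm
          (Z.quotientEquivOfIsCompl C hc).symm).toEquiv
      rw [Nat.card_congr (e1.trans (Equiv.prodCongr (Equiv.refl _) e2)), Nat.card_prod]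
    have hVcard : Nat.card V = Nat.card Z * Nat.card (V ⧸ Z) := by
      rw [Nat.card_congr (prodEquivOfIsCompl Z C hc).symm.toEquiv, Nat.card_prod,
        Nat.card_congr (Z.quotientEquivOfIsCompl C hc).symm.toEquiv]
    rw [hEnd, hNil, hsplit, ← hIH, hVcard]
    ring

end FH

theorem stmt_1 (K : Type*) [Field K] [Finite K]
    (X : Type*) [AddCommGroup X] [Module K X] [Finite X] :
    Nat.card X * Nat.card {T : Module.End K X // IsNilpotent T}
      = Nat.card (Module.End K X) :=
  FH.key K (Module.finrank K X) X rfl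
end

section
/- Let X be a finite set with N ≥ 1 elements. The number of functions T : X → X that are eventually constant (i.e., some iterate T^k is a constant function) equals N^(N-1). -/
namespace Stmt14
open Function List

variable {n : ℕ}

open scoped Classical in
noncomputable def per (f : Fin n → Fin n) : Finset (Fin n) :=
  Finset.univ.filter (fun x => ∃ j ∈ Finset.Icc 1 n, f^[j] x = x)

lemma mem_per {f : Fin n → Fin n} {x : Fin n} :
    x ∈ per f ↔ ∃ j, 1 ≤ j ∧ j ≤ n ∧ f^[j] x = x := by
  simp [per, Finset.mem_filter, Finset.mem_Icc, and_assoc]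

lemma per_apply {f : Fin n → Fin n} {x : Fin n} (hx : x ∈ per f) : f x ∈ per f := by
  rcases mem_per.1 hx with ⟨j, h1, h2, h3⟩
  refine mem_per.2 ⟨j, h1, h2, ?_⟩
  rw [← Function.iterate_succ_apply, Function.iterate_succ_apply', h3]

lemma per_iterate {f : Fin n → Fin n} {x : Fin n} (hx : x ∈ per f) (t : ℕ) :
    f^[t] x ∈ per f := by
  induction t with
  | zero => simpa
  | succ t ih => rw [Function.iterate_succ_apply']; exact per_apply ih

lemma per_mul {f : Fin n → Fin n} {x : Fin n} {j : ℕ} (h : f^[j] x = x) (m : ℕ) :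
    f^[m * j] x = x := by
  induction m with
  | zero => simp
  | succ m ih => rw [Nat.succ_mul, Function.iterate_add_apply, h, ih]

lemma per_inj {f : Fin n → Fin n} {x y : Fin n} (hx : x ∈ per f) (hy : y ∈ per f)
    (h : f x = f y) : x = y := by
  rcases mem_per.1 hx with ⟨j, hj1, _, hj3⟩
  rcases mem_per.1 hy with ⟨l, hl1, _, hl3⟩
  have hx' : f^[j * l] x = x := by rw [mul_comm]; exact per_mul hj3 l
  have hy' : f^[j * l] y = y := per_mul hl3 j
  have hpos : 1 ≤ j * l := Nat.one_le_iff_ne_zero.2 (by positivity)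
  have hstep : ∀ z : Fin n, f^[j * l] z = f^[j * l - 1] (f z) := by
    intro z
    conv_lhs => rw [show j * l = (j * l - 1) + 1 from by omega]
    rw [Function.iterate_succ_apply]
  calc x = f^[j * l] x := hx'.symm
    _ = f^[j * l - 1] (f x) := hstep x
    _ = f^[j * l - 1] (f y) := by rw [h]
    _ = f^[j * l] y := (hstep y).symm
    _ = y := hy'

lemma exists_rep (f : Fin n → Fin n) (z : Fin n) :
    ∃ i j, i < j ∧ j ≤ n ∧ f^[i] z = f^[j] z := by
  have h := Finset.exists_ne_map_eq_of_card_lt_of_maps_to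
    (s := Finset.range (n + 1)) (t := (Finset.univ : Finset (Fin n)))
    (by simp) (fun a _ => Finset.mem_univ (f^[a] z))
  rcases h with ⟨i, hi, j, hj, hne, heq⟩
  rcases lt_or_gt_of_ne hne with hlt | hlt
  · exact ⟨i, j, hlt, Nat.lt_succ_iff.1 (Finset.mem_range.1 hj), heq⟩
  · exact ⟨j, i, hlt, Nat.lt_succ_iff.1 (Finset.mem_range.1 hi), heq.symm⟩

lemma iterate_mem_per (f : Fin n → Fin n) (z : Fin n) : f^[n] z ∈ per f := by
  obtain ⟨i, j, hij, hjn, heq⟩ := exists_rep f z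
  have h1 : f^[i] z ∈ per f := by
    refine mem_per.2 ⟨j - i, by omega, by omega, ?_⟩
    rw [← Function.iterate_add_apply, show j - i + i = j from by omega, ← heq]
  have h2 : f^[n] z = f^[n - i] (f^[i] z) := by
    rw [← Function.iterate_add_apply]; congr 1; omega
  rw [h2]; exact per_iterate h1 _

lemma per_nonempty (hn : 0 < n) (f : Fin n → Fin n) : (per f).Nonempty :=
  ⟨f^[n] ⟨0, hn⟩, iterate_mem_per f _⟩

lemma image_per (f : Fin n → Fin n) : (per f).image f = per f := by
  apply Finset.eq_of_subset_of_card_le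
  · intro y hy; rcases Finset.mem_image.1 hy with ⟨x, hx, rfl⟩; exact per_apply hx
  · rw [Finset.card_image_of_injOn (fun x hx y hy h => per_inj hx hy h)]

/-! ### List utilities -/

lemma toFinset_map' (f : Fin n → Fin n) (l : List (Fin n)) :
    (l.map f).toFinset = l.toFinset.image f := by ext a; simp

def sortC (C : Finset (Fin n)) : List (Fin n) := C.sort (· ≤ ·)

lemma sortC_nodup (C : Finset (Fin n)) : (sortC C).Nodup := Finset.sort_nodup _ _
lemma sortC_toFinset (C : Finset (Fin n)) : (sortC C).toFinset = C := Finset.sort_toFinset _ _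
lemma mem_sortC {C : Finset (Fin n)} {y : Fin n} : y ∈ sortC C ↔ y ∈ C := Finset.mem_sort _
lemma length_sortC (C : Finset (Fin n)) : (sortC C).length = C.card := Finset.length_sort _

def funOf (L : List (Fin n)) (y : Fin n) : Fin n := L.getD ((sortC L.toFinset).idxOf y) y

def nxt (L : List (Fin n)) (y : Fin n) : Fin n := L.getD (L.idxOf y + 1) y

lemma funOf_mem {L : List (Fin n)} {y : Fin n} (hy : y ∈ L) : funOf L y ∈ L := by
  have h1 : (sortC L.toFinset).idxOf y < (sortC L.toFinset).length :=
    List.idxOf_lt_length_iff.2 (mem_sortC.2 (List.mem_toFinset.2 hy))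
  have h2 : (sortC L.toFinset).length ≤ L.length := by
    rw [length_sortC]; exact L.toFinset_card_le
  rw [funOf, List.getD_eq_getElem _ _ (lt_of_lt_of_le h1 h2)]
  exact List.getElem_mem _

lemma funOf_injOn {L : List (Fin n)} (hL : L.Nodup) {y z : Fin n} (hy : y ∈ L) (hz : z ∈ L)
    (h : funOf L y = funOf L z) : y = z := by
  have hcard : (sortC L.toFinset).length = L.length := by
    rw [length_sortC, List.toFinset_card_of_nodup hL]
  have h1 : (sortC L.toFinset).idxOf y < (sortC L.toFinset).length :=
    List.idxOf_lt_length_iff.2 (mem_sortC.2 (List.mem_toFinset.2 hy))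
  have h2 : (sortC L.toFinset).idxOf z < (sortC L.toFinset).length :=
    List.idxOf_lt_length_iff.2 (mem_sortC.2 (List.mem_toFinset.2 hz))
  rw [funOf, funOf, List.getD_eq_getElem _ _ (hcard ▸ h1), List.getD_eq_getElem _ _ (hcard ▸ h2)]
    at h
  have hidx := hL.getElem_inj_iff.1 h
  exact (List.idxOf_inj (mem_sortC.2 (List.mem_toFinset.2 hy))).1 hidx

lemma RT1 {L : List (Fin n)} (hL : L.Nodup) : (sortC L.toFinset).map (funOf L) = L := by
  have hlen : (sortC L.toFinset).length = L.length := by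
    rw [length_sortC, List.toFinset_card_of_nodup hL]
  apply List.ext_getElem (by simpa using hlen)
  intro i h1 h2
  rw [List.getElem_map]
  unfold funOf
  rw [List.Nodup.idxOf_getElem (sortC_nodup _) i (by simpa using h1), List.getD_eq_getElem]

lemma RT2 {f : Fin n → Fin n} {C : Finset (Fin n)} (himg : C.image f = C) {y : Fin n}
    (hy : y ∈ C) : funOf ((sortC C).map f) y = f y := by
  have htf : ((sortC C).map f).toFinset = C := by
    rw [toFinset_map', sortC_toFinset, himg]
  unfold funOf
  rw [htf]
  have hidx : (sortC C).idxOf y < (sortC C).length :=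
    List.idxOf_lt_length_iff.2 (mem_sortC.2 hy)
  rw [List.getD_eq_getElem _ _ (by simpa using hidx), List.getElem_map]
  congr 1
  exact List.getElem_idxOf hidx

/-! ### The map G : endofunctions → (eventually constant, point) -/

noncomputable def Lof (f : Fin n → Fin n) : List (Fin n) := (sortC (per f)).map f

noncomputable def Tof (f : Fin n → Fin n) (y : Fin n) : Fin n :=
  if y ∈ per f then nxt (Lof f) y else f y

noncomputable def xof (hn : 0 < n) (f : Fin n → Fin n) : Fin n := (Lof f).getD 0 ⟨0, hn⟩

lemma Lof_nodup (f : Fin n → Fin n) : (Lof f).Nodup :=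
  (sortC_nodup _).map_on
    (fun x hx y hy h => per_inj (mem_sortC.1 hx) (mem_sortC.1 hy) h)

lemma Lof_toFinset (f : Fin n → Fin n) : (Lof f).toFinset = per f := by
  rw [Lof, toFinset_map', sortC_toFinset, image_per]

lemma Lof_length (f : Fin n → Fin n) : (Lof f).length = (per f).card := by
  rw [Lof, List.length_map, length_sortC]

lemma mem_Lof {f : Fin n → Fin n} {y : Fin n} : y ∈ Lof f ↔ y ∈ per f := by
  rw [← List.mem_toFinset, Lof_toFinset]

lemma Lof_length_le (f : Fin n → Fin n) : (Lof f).length ≤ n := by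
  rw [Lof_length]
  simpa using Finset.card_le_univ (per f)

lemma Tof_of_not_mem {f : Fin n → Fin n} {y : Fin n} (hy : y ∉ per f) : Tof f y = f y :=
  if_neg hy

lemma Tof_getElem (f : Fin n → Fin n) {i : ℕ} (hi : i < (Lof f).length) :
    Tof f ((Lof f)[i]) =
      (Lof f)[min (i + 1) ((Lof f).length - 1)]'(by omega) := by
  have hmem : (Lof f)[i] ∈ per f := by rw [← mem_Lof]; exact List.getElem_mem hi
  rw [Tof, if_pos hmem, nxt, List.Nodup.idxOf_getElem (Lof_nodup f) i hi]
  by_cases h : i + 1 < (Lof f).length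
  · rw [List.getD_eq_getElem _ _ h]
    congr 1
    omega
  · rw [List.getD_eq_default _ _ (by omega)]
    congr 1
    omega

lemma Tof_iter_getElem (f : Fin n → Fin n) (t : ℕ) {i : ℕ} (hi : i < (Lof f).length) :
    (Tof f)^[t] ((Lof f)[i]) =
      (Lof f)[min (i + t) ((Lof f).length - 1)]'(by omega) := by
  induction t with
  | zero =>
    simp only [Function.iterate_zero, id_eq]
    congr 1
    omega
  | succ t ih =>
    rw [Function.iterate_succ_apply', ih, Tof_getElem f (by omega)]
    congr 1
    omega

lemma Tof_mem {f : Fin n → Fin n} {y : Fin n} (hy : y ∈ per f) : Tof f y ∈ per f := by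
  have hmem : y ∈ Lof f := mem_Lof.2 hy
  have hi : (Lof f).idxOf y < (Lof f).length := List.idxOf_lt_length_iff.2 hmem
  have := Tof_getElem f hi
  rw [List.getElem_idxOf hi] at this
  rw [this, ← mem_Lof]
  exact List.getElem_mem _

lemma Tof_iter_mem {f : Fin n → Fin n} {y : Fin n} (hy : y ∈ per f) (t : ℕ) :
    (Tof f)^[t] y ∈ per f := by
  induction t with
  | zero => simpa
  | succ t ih => rw [Function.iterate_succ_apply']; exact Tof_mem ih

lemma Tof_iterate_n_mem (f : Fin n → Fin n) (y : Fin n) : (Tof f)^[n] y ∈ per f := by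
  by_cases hex : ∃ i, i ≤ n ∧ (Tof f)^[i] y ∈ per f
  · obtain ⟨i, hi, hmem⟩ := hex
    have : (Tof f)^[n] y = (Tof f)^[n - i] ((Tof f)^[i] y) := by
      rw [← Function.iterate_add_apply]; congr 1; omega
    rw [this]
    exact Tof_iter_mem hmem _
  · push_neg at hex
    have hagree : ∀ i, i ≤ n → (Tof f)^[i] y = f^[i] y := by
      intro i hi
      induction i with
      | zero => simp
      | succ i ih =>
        rw [Function.iterate_succ_apply', Function.iterate_succ_apply',
          ih (by omega), Tof_of_not_mem]
        rw [← ih (by omega)]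
        exact hex i (by omega)
    exact absurd ((hagree n le_rfl) ▸ iterate_mem_per f y) (hex n le_rfl)

lemma Tof_const (hn : 0 < n) (f : Fin n → Fin n) (y : Fin n) :
    (Tof f)^[n + n] y =
      (Lof f)[(Lof f).length - 1]'(by
        have := Lof_length f
        have := Finset.card_pos.2 (per_nonempty hn f)
        omega) := by
  have hz : (Tof f)^[n] y ∈ per f := Tof_iterate_n_mem f y
  have hmem : (Tof f)^[n] y ∈ Lof f := mem_Lof.2 hz
  have hi : (Lof f).idxOf ((Tof f)^[n] y) < (Lof f).length := List.idxOf_lt_length_iff.2 hmem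
  rw [Function.iterate_add_apply]
  rw [← List.getElem_idxOf hi, Tof_iter_getElem f n hi]
  have hle := Lof_length_le f
  congr 1
  omega

lemma Tof_EC (hn : 0 < n) (f : Fin n → Fin n) :
    ∃ k, ∀ a b : Fin n, (Tof f)^[k] a = (Tof f)^[k] b :=
  ⟨n + n, fun a b => by rw [Tof_const hn f a, Tof_const hn f b]⟩

/-! ### The map F : (eventually constant, point) → endofunctions -/

lemma ec_step {T : Fin n → Fin n} (hT : ∃ k, ∀ a b : Fin n, T^[k] a = T^[k] b) (x : Fin n) :
    ∃ j, T^[j + 1] x = T^[j] x := by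
  obtain ⟨k, hk⟩ := id hT
  exact ⟨k, by rw [Function.iterate_succ_apply, hk (T x) x]⟩

noncomputable def dOf (T : Fin n → Fin n) (x : Fin n)
    (hT : ∃ k, ∀ a b : Fin n, T^[k] a = T^[k] b) : ℕ :=
  Nat.find (ec_step hT x)

noncomputable def spineOf (T : Fin n → Fin n) (x : Fin n)
    (hT : ∃ k, ∀ a b : Fin n, T^[k] a = T^[k] b) : List (Fin n) :=
  (List.range (dOf T x hT + 1)).map (fun i => T^[i] x)

noncomputable def Fmap (T : Fin n → Fin n) (x : Fin n)
    (hT : ∃ k, ∀ a b : Fin n, T^[k] a = T^[k] b) (y : Fin n) : Fin n :=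
  if y ∈ spineOf T x hT then funOf (spineOf T x hT) y else T y

variable {T : Fin n → Fin n} {x : Fin n} {hT : ∃ k, ∀ a b : Fin n, T^[k] a = T^[k] b}

lemma dOf_spec : T^[dOf T x hT + 1] x = T^[dOf T x hT] x := Nat.find_spec (ec_step hT x)

lemma dOf_min {j : ℕ} (hj : j < dOf T x hT) : T^[j + 1] x ≠ T^[j] x :=
  Nat.find_min (ec_step hT x) hj

lemma dOf_stable (t : ℕ) : T^[dOf T x hT + t] x = T^[dOf T x hT] x := by
  induction t with
  | zero => rfl
  | succ t ih =>
    rw [show dOf T x hT + (t + 1) = (dOf T x hT + t) + 1 from rfl,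
      Function.iterate_succ_apply', ih]
    exact (Function.iterate_succ_apply' T _ x).symm.trans dOf_spec

lemma dOf_stable' {j : ℕ} (hj : dOf T x hT ≤ j) : T^[j] x = T^[dOf T x hT] x := by
  rw [show j = dOf T x hT + (j - dOf T x hT) from by omega, dOf_stable]

lemma iter_const {k : ℕ} (hk : ∀ a b : Fin n, T^[k] a = T^[k] b) (y : Fin n) {j : ℕ}
    (hj1 : k ≤ j) (hj2 : dOf T x hT ≤ j) : T^[j] y = T^[dOf T x hT] x := by
  have h1 : T^[j] y = T^[j] x := by
    rw [show j = (j - k) + k from by omega, Function.iterate_add_apply,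
      Function.iterate_add_apply, hk y x]
  rw [h1, dOf_stable' hj2]

lemma rep_iter {i j : ℕ} (hij : i < j) (heq : T^[i] x = T^[j] x) (m : ℕ) :
    T^[i + m * (j - i)] x = T^[i] x := by
  induction m with
  | zero => simp
  | succ m ih =>
    have h1 : i + (m + 1) * (j - i) = m * (j - i) + j := by
      have : i ≤ j := hij.le
      ring_nf
      omega
    rw [h1, Function.iterate_add_apply, ← heq,
      show T^[i] x = T^[i + 0] x from by rw [Nat.add_zero]]
    rw [Nat.add_zero, ← Function.iterate_add_apply]
    rw [Nat.add_comm] at ih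
    exact ih

lemma spine_length : (spineOf T x hT).length = dOf T x hT + 1 := by
  rw [spineOf, List.length_map, List.length_range]

lemma spine_getElem {i : ℕ} (hi : i < (spineOf T x hT).length) :
    (spineOf T x hT)[i] = T^[i] x := by
  simp only [spineOf, List.getElem_map, List.getElem_range]

lemma mem_spine {y : Fin n} : y ∈ spineOf T x hT ↔ ∃ i, i ≤ dOf T x hT ∧ T^[i] x = y := by
  simp only [spineOf, List.mem_map, List.mem_range]
  constructor
  · rintro ⟨i, hi, rfl⟩; exact ⟨i, by omega, rfl⟩
  · rintro ⟨i, hi, rfl⟩; exact ⟨i, by omega, rfl⟩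

lemma spine_inj_aux {i j : ℕ} (hij : i < j) (hjd : j ≤ dOf T x hT) : T^[i] x ≠ T^[j] x := by
  intro heq
  obtain ⟨k, hk⟩ := id hT
  have h1 : T^[i + (k + dOf T x hT) * (j - i)] x = T^[i] x := rep_iter hij heq _
  have hge : k + dOf T x hT ≤ (k + dOf T x hT) * (j - i) :=
    Nat.le_mul_of_pos_right _ (by omega)
  have h2 : T^[i + (k + dOf T x hT) * (j - i)] x = T^[dOf T x hT] x :=
    iter_const hk x (by omega) (by omega)
  have h3 : T^[i] x = T^[dOf T x hT] x := h1.symm.trans h2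
  have h4 : T^[i + 1] x = T^[i] x := by
    calc T^[i + 1] x = T (T^[i] x) := Function.iterate_succ_apply' T i x
      _ = T (T^[dOf T x hT] x) := by rw [h3]
      _ = T^[dOf T x hT + 1] x := (Function.iterate_succ_apply' T _ x).symm
      _ = T^[dOf T x hT] x := dOf_spec
      _ = T^[i] x := h3.symm
  exact dOf_min (by omega) h4

lemma spine_nodup : (spineOf T x hT).Nodup := by
  refine List.Nodup.map_on ?_ List.nodup_range
  intro i hi j hj h
  rw [List.mem_range] at hi hj
  rcases lt_trichotomy i j with hlt | heq | hgt
  · exact absurd h (spine_inj_aux hlt (by omega))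
  · exact heq
  · exact absurd h.symm (spine_inj_aux hgt (by omega))

lemma closure {g : Fin n → Fin n} {C : Finset (Fin n)} (hmap : ∀ y ∈ C, g y ∈ C) :
    ∀ (t : ℕ) {y : Fin n}, y ∈ C → g^[t] y ∈ C := by
  intro t
  induction t with
  | zero => intro y hy; simpa
  | succ t ih =>
    intro y hy
    rw [Function.iterate_succ_apply']
    exact hmap _ (ih hy)

lemma cancel {g : Fin n → Fin n} {C : Finset (Fin n)} (hmap : ∀ y ∈ C, g y ∈ C)
    (hinj : ∀ y ∈ C, ∀ z ∈ C, g y = g z → y = z) :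
    ∀ (i : ℕ) {y z : Fin n}, y ∈ C → z ∈ C → g^[i] y = g^[i] z → y = z := by
  intro i
  induction i with
  | zero => intro y z _ _ h; simpa using h
  | succ i ih =>
    intro y z hy hz h
    rw [Function.iterate_succ_apply, Function.iterate_succ_apply] at h
    exact hinj y hy z hz (ih (hmap y hy) (hmap z hz) h)

lemma Fmap_of_mem {y : Fin n} (hy : y ∈ spineOf T x hT) :
    Fmap T x hT y = funOf (spineOf T x hT) y := if_pos hy

lemma Fmap_of_not_mem {y : Fin n} (hy : y ∉ spineOf T x hT) : Fmap T x hT y = T y := if_neg hy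

lemma Fmap_maps : ∀ y ∈ (spineOf T x hT).toFinset, Fmap T x hT y ∈ (spineOf T x hT).toFinset := by
  intro y hy
  rw [Fmap_of_mem (List.mem_toFinset.1 hy)]
  exact List.mem_toFinset.2 (funOf_mem (List.mem_toFinset.1 hy))

lemma Fmap_inj : ∀ y ∈ (spineOf T x hT).toFinset, ∀ z ∈ (spineOf T x hT).toFinset,
    Fmap T x hT y = Fmap T x hT z → y = z := by
  intro y hy z hz h
  rw [Fmap_of_mem (List.mem_toFinset.1 hy), Fmap_of_mem (List.mem_toFinset.1 hz)] at h
  exact funOf_injOn spine_nodup (List.mem_toFinset.1 hy) (List.mem_toFinset.1 hz) h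

lemma per_Fmap : per (Fmap T x hT) = (spineOf T x hT).toFinset := by
  ext y
  constructor
  · intro hy
    by_contra hyC
    obtain ⟨j₀, hj1, hj2, hj3⟩ := mem_per.1 hy
    have havoid : ∀ i : ℕ, (Fmap T x hT)^[i] y ∉ (spineOf T x hT).toFinset := by
      intro i hi
      have hall : ∀ t : ℕ, (Fmap T x hT)^[t + i] y ∈ (spineOf T x hT).toFinset := by
        intro t
        rw [Function.iterate_add_apply]
        exact closure Fmap_maps t hi
      have hyy : (Fmap T x hT)^[i * j₀] y = y := per_mul hj3 i
      have : y ∈ (spineOf T x hT).toFinset := by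
        rw [← hyy, show i * j₀ = (i * j₀ - i) + i from by
          have : i ≤ i * j₀ := Nat.le_mul_of_pos_right _ (by omega)
          omega]
        exact hall _
      exact hyC this
    have hagree : ∀ i : ℕ, (Fmap T x hT)^[i] y = T^[i] y := by
      intro i
      induction i with
      | zero => simp
      | succ i ih =>
        have hnot : T^[i] y ∉ spineOf T x hT := by
          intro hmem
          exact havoid i (by rw [ih]; exact List.mem_toFinset.2 hmem)
        rw [Function.iterate_succ_apply', Function.iterate_succ_apply', ih,
          Fmap_of_not_mem hnot]
    obtain ⟨k, hk⟩ := id hT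
    have hroot : T^[max k (dOf T x hT)] y = T^[dOf T x hT] x :=
      iter_const hk y (le_max_left _ _) (le_max_right _ _)
    refine havoid (max k (dOf T x hT)) ?_
    rw [hagree, hroot]
    exact List.mem_toFinset.2 (mem_spine.2 ⟨dOf T x hT, le_rfl, rfl⟩)
  · intro hy
    obtain ⟨i, j, hij, hjn, heq⟩ := exists_rep (Fmap T x hT) y
    have hmem2 : (Fmap T x hT)^[j - i] y ∈ (spineOf T x hT).toFinset :=
      closure Fmap_maps _ hy
    have hiter : (Fmap T x hT)^[i] ((Fmap T x hT)^[j - i] y) = (Fmap T x hT)^[i] y := by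
      rw [← Function.iterate_add_apply, show i + (j - i) = j from by omega, ← heq]
    have h1 : (Fmap T x hT)^[j - i] y = y := cancel Fmap_maps Fmap_inj i hmem2 hy hiter
    exact mem_per.2 ⟨j - i, by omega, by omega, h1⟩

lemma Lof_Fmap : Lof (Fmap T x hT) = spineOf T x hT := by
  rw [Lof, per_Fmap]
  have hcongr : ∀ y ∈ sortC (spineOf T x hT).toFinset,
      Fmap T x hT y = funOf (spineOf T x hT) y := by
    intro y hy
    exact Fmap_of_mem (List.mem_toFinset.1 (mem_sortC.1 hy))
  rw [List.map_congr_left hcongr]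
  exact RT1 spine_nodup

lemma Tof_Fmap : Tof (Fmap T x hT) = T := by
  funext y
  by_cases hy : y ∈ spineOf T x hT
  · rw [Tof, if_pos (by rw [per_Fmap]; exact List.mem_toFinset.2 hy), Lof_Fmap]
    have hi : (spineOf T x hT).idxOf y < (spineOf T x hT).length :=
      List.idxOf_lt_length_iff.2 hy
    have hyi : (spineOf T x hT)[(spineOf T x hT).idxOf y] = y := List.getElem_idxOf hi
    rw [nxt]
    by_cases h2 : (spineOf T x hT).idxOf y + 1 < (spineOf T x hT).length
    · rw [List.getD_eq_getElem _ _ h2, spine_getElem]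
      have hyd : y = T^[(spineOf T x hT).idxOf y] x := by
        conv_lhs => rw [← hyi]
        rw [spine_getElem hi]
      conv_rhs => rw [hyd]
      exact Function.iterate_succ_apply' T _ x
    · rw [List.getD_eq_default _ _ (by omega)]
      have hd : (spineOf T x hT).idxOf y = dOf T x hT := by
        have := spine_length (T := T) (x := x) (hT := hT)
        omega
      have hyd : y = T^[dOf T x hT] x := by
        conv_lhs => rw [← hyi]
        rw [spine_getElem hi, hd]
      conv_lhs => rw [hyd]
      conv_rhs => rw [hyd]
      exact ((Function.iterate_succ_apply' T _ x).symm.trans dOf_spec).symm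
  · rw [Tof, if_neg (by rw [per_Fmap]; exact fun h => hy (List.mem_toFinset.1 h)),
      Fmap_of_not_mem hy]

lemma xof_Fmap (hn : 0 < n) : xof hn (Fmap T x hT) = x := by
  rw [xof, Lof_Fmap, List.getD_eq_getElem _ _ (by rw [spine_length]; omega), spine_getElem]
  simp

lemma Fmap_Tof (hn : 0 < n) (f : Fin n → Fin n) :
    Fmap (Tof f) (xof hn f) (Tof_EC hn f) = f := by
  have hm : 0 < (Lof f).length := by
    rw [Lof_length]
    exact Finset.card_pos.2 (per_nonempty hn f)
  have hx0 : xof hn f = (Lof f)[0] := List.getD_eq_getElem _ _ hm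
  have hiter : ∀ t : ℕ,
      (Tof f)^[t] (xof hn f) = (Lof f)[min t ((Lof f).length - 1)]'(by omega) := by
    intro t
    rw [hx0, Tof_iter_getElem f t hm]
    congr 1
    omega
  have hd : dOf (Tof f) (xof hn f) (Tof_EC hn f) = (Lof f).length - 1 := by
    rw [dOf, Nat.find_eq_iff]
    constructor
    · rw [hiter, hiter]
      congr 1
      omega
    · intro j hj h
      rw [hiter, hiter] at h
      have := ((Lof_nodup f).getElem_inj_iff).1 h
      omega
  have hspine : spineOf (Tof f) (xof hn f) (Tof_EC hn f) = Lof f := by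
    apply List.ext_getElem
    · rw [spine_length, hd]
      omega
    · intro i h1 h2
      rw [spine_getElem, hiter]
      congr 1
      omega
  funext y
  by_cases hy : y ∈ per f
  · have hyS : y ∈ spineOf (Tof f) (xof hn f) (Tof_EC hn f) := by
      rw [hspine]; exact mem_Lof.2 hy
    rw [Fmap_of_mem hyS, hspine]
    exact RT2 (image_per f) hy
  · have hyS : y ∉ spineOf (Tof f) (xof hn f) (Tof_EC hn f) := by
      rw [hspine]
      exact fun h => hy (mem_Lof.1 h)
    rw [Fmap_of_not_mem hyS, Tof_of_not_mem hy]

theorem card_EC_mul (hn : 0 < n) :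
    Nat.card {T : Fin n → Fin n // ∃ k : ℕ, ∀ a b : Fin n, T^[k] a = T^[k] b} * n = n ^ n := by
  have e : ({T : Fin n → Fin n // ∃ k : ℕ, ∀ a b : Fin n, T^[k] a = T^[k] b} × Fin n)
      ≃ (Fin n → Fin n) :=
    { toFun := fun p => Fmap p.1.1 p.2 p.1.2
      invFun := fun f => (⟨Tof f, Tof_EC hn f⟩, xof hn f)
      left_inv := fun p => by
        obtain ⟨⟨T, hT⟩, x⟩ := p
        exact Prod.ext (Subtype.ext Tof_Fmap) (xof_Fmap hn)
      right_inv := fun f => Fmap_Tof hn f }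
  have h := Nat.card_congr e
  rw [Nat.card_prod] at h
  simp only [Nat.card_eq_fintype_card, Fintype.card_fin, Fintype.card_fun] at h
  exact h

end Stmt14

theorem stmt_14 (X : Type*) [Fintype X] (N : ℕ) (hN : Fintype.card X = N) (h1 : 1 ≤ N) :
    Nat.card {T : X → X // ∃ k : ℕ, ∀ x y : X, T^[k] x = T^[k] y} = N ^ (N - 1) := by
  classical
  have e : X ≃ Fin N := Fintype.equivFinOfCardEq hN
  have e2 : {T : X → X // ∃ k : ℕ, ∀ x y : X, T^[k] x = T^[k] y}
      ≃ {T : Fin N → Fin N // ∃ k : ℕ, ∀ a b : Fin N, T^[k] a = T^[k] b} := by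
    refine Equiv.subtypeEquiv (Equiv.arrowCongr e e) ?_
    intro T
    have key : ∀ k : ℕ, ((Equiv.arrowCongr e e) T)^[k] = fun z => e (T^[k] (e.symm z)) := by
      intro k
      induction k with
      | zero => funext z; simp
      | succ k ih =>
        funext z
        rw [Function.iterate_succ_apply', ih]
        simp [Equiv.arrowCongr, Function.iterate_succ_apply']
    constructor
    · rintro ⟨k, hk⟩
      refine ⟨k, fun a b => ?_⟩
      rw [key]
      simp only []
      rw [hk (e.symm a) (e.symm b)]
    · rintro ⟨k, hk⟩
      refine ⟨k, fun a b => ?_⟩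
      have h1 := hk (e a) (e b)
      rw [key] at h1
      simpa using h1
  rw [Nat.card_congr e2]
  have h := Stmt14.card_EC_mul (n := N) h1
  have hpow : N ^ N = N ^ (N - 1) * N := by
    rw [← pow_succ]
    congr 1
    omega
  rw [hpow] at h
  exact Nat.eq_of_mul_eq_mul_right h1 h
end

section
/- Let X be an n-dimensional vector space over a finite field with q elements. Then the number of linear operators on X whose Fitting decomposition has nilpotent part equal to all of X (i.e., the operator is nilpotent) times q^n equals q^(n^2), the total number of operators. -/
set_option linter.unusedSectionVars false
set_option maxHeartbeats 1000000

open Module Submodule LinearMap Finset Set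

noncomputable section

namespace FineHerstein

lemma nat_card_fiber_sum {α β : Type*} [Finite α] [Fintype β] (f : α → β) :
    Nat.card α = ∑ b : β, Nat.card {a // f a = b} := by
  classical
  haveI := Fintype.ofFinite α
  simp_rw [Nat.card_eq_fintype_card]
  rw [← Fintype.card_congr (Equiv.sigmaFiberEquiv f), Fintype.card_sigma]

/-- Product formula `∏ i < k, (q^k - q^i)`, the cardinality of `GL_k(F_q)`. -/
def gl (q k : ℕ) : ℕ := ∏ i ∈ Finset.range k, (q ^ k - q ^ i)

/-- Number of nilpotent endomorphisms of the standard `k`-dimensional space. -/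
def nilCard (K : Type*) [Field K] [Fintype K] (k : ℕ) : ℕ :=
  Nat.card {T : Module.End K (Fin k → K) // IsNilpotent T}

lemma gl_zero (q : ℕ) : gl q 0 = 1 := rfl

lemma gl_succ (q k : ℕ) : gl q (k + 1) = (q ^ (k + 1) - 1) * (q ^ k * gl q k) := by
  rw [gl, Finset.prod_range_succ']
  have h : ∀ i, q ^ (k + 1) - q ^ (i + 1) = q * (q ^ k - q ^ i) := by
    intro i
    rw [Nat.mul_sub, pow_succ, pow_succ]
    ring_nf
  simp_rw [h]
  rw [Finset.prod_mul_distrib, Finset.prod_const, Finset.card_range, pow_zero, gl]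
  ring

lemma gl_pos {q : ℕ} (hq : 2 ≤ q) (k : ℕ) : 0 < gl q k := by
  apply Finset.prod_pos
  intro i hi
  have : q ^ i < q ^ k := Nat.pow_lt_pow_right hq (Finset.mem_range.mp hi)
  omega

variable {K : Type*} [Field K] [Fintype K]

/-- The algebra equivalence between endomorphisms of an `n`-dimensional space and of the
standard space. -/
def endAlgEquiv (X : Type*) [AddCommGroup X] [Module K X] [FiniteDimensional K X]
    (n : ℕ) (hn : Module.finrank K X = n) :
    Module.End K X ≃ₐ[K] Module.End K (Fin n → K) :=
  (algEquivMatrix ((Module.finBasis K X).reindex (finCongr hn))).trans algEquivMatrix'.symm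

lemma nilCard_eq (X : Type*) [AddCommGroup X] [Module K X] [FiniteDimensional K X]
    (n : ℕ) (hn : Module.finrank K X = n) :
    Nat.card {T : Module.End K X // IsNilpotent T} = nilCard K n := by
  apply Nat.card_congr
  refine Equiv.subtypeEquiv (endAlgEquiv X n hn).toEquiv (fun T => ⟨fun h => ?_, fun h => ?_⟩)
  · exact h.map (endAlgEquiv X n hn)
  · simpa using h.map (endAlgEquiv X n hn).symm

lemma unitCard_eq (X : Type*) [AddCommGroup X] [Module K X] [FiniteDimensional K X]
    (n : ℕ) (hn : Module.finrank K X = n) :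
    Nat.card {T : Module.End K X // IsUnit T} = gl (Fintype.card K) n := by
  have e1 : {T : Module.End K X // IsUnit T} ≃ (Module.End K X)ˣ :=
    { toFun := fun T => T.2.unit
      invFun := fun u => ⟨u, u.isUnit⟩
      left_inv := fun T => Subtype.ext rfl
      right_inv := fun u => Units.ext rfl }
  have e2 : (Module.End K X)ˣ ≃ (Matrix (Fin n) (Fin n) K)ˣ :=
    Units.mapEquiv (algEquivMatrix ((Module.finBasis K X).reindex (finCongr hn))).toMulEquiv
  rw [Nat.card_congr (e1.trans e2)]
  rw [show ((Matrix (Fin n) (Fin n) K)ˣ) = GL (Fin n) K from rfl]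
  rw [Matrix.card_GL_field]
  rw [gl, Finset.prod_range]


variable {K : Type*} [Field K] [Fintype K]
variable {X : Type*} [AddCommGroup X] [Module K X] [FiniteDimensional K X]

lemma li_card (n : ℕ) (hn : Module.finrank K X = n) :
    Nat.card {s : Fin n → X // LinearIndependent K s} = gl (Fintype.card K) n := by
  haveI : Finite X := Module.finite_of_finite K
  rw [card_linearIndependent (show n ≤ Module.finrank K X by rw [hn]), gl,
    ← Fin.prod_univ_eq_prod_range]
  simp [hn]

variable (K X) in
abbrev CPair := {p : Submodule K X × Submodule K X // IsCompl p.1 p.2}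


/-- The Fitting pair of an endomorphism. -/
noncomputable def fitt (T : Module.End K X) : Submodule K X × Submodule K X :=
  (⨆ i, LinearMap.ker (T ^ i), ⨅ i, LinearMap.range (T ^ i))

lemma isCompl_fitt (T : Module.End K X) : IsCompl (fitt T).1 (fitt T).2 :=
  T.isCompl_iSup_ker_pow_iInf_range_pow

lemma mem_fitt_fst {T : Module.End K X} {x : X} : x ∈ (fitt T).1 ↔ ∃ i, (T ^ i) x = 0 := by
  rw [fitt]
  exact Submodule.mem_iSup_of_chain T.iterateKer x

-- kernel and range of a conjugated endomorphism
lemma ker_conj {Y : Type*} [AddCommGroup Y] [Module K Y] (e : Y ≃ₗ[K] X)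
    (f : Module.End K Y) : LinearMap.ker (e.conj f) = (LinearMap.ker f).map (e : Y →ₗ[K] X) := by
  rw [LinearEquiv.conj_apply, LinearMap.ker_comp, LinearMap.ker_comp, LinearEquiv.ker,
    Submodule.comap_bot, Submodule.map_equiv_eq_comap_symm]

lemma range_conj {Y : Type*} [AddCommGroup Y] [Module K Y] (e : Y ≃ₗ[K] X)
    (f : Module.End K Y) : LinearMap.range (e.conj f) = (LinearMap.range f).map (e : Y →ₗ[K] X) := by
  rw [LinearEquiv.conj_apply, LinearMap.range_comp, LinearEquiv.range,
    Submodule.map_top, LinearMap.range_comp]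

lemma range_prodMap {M M₂ M₃ M₄ : Type*} [AddCommGroup M] [Module K M] [AddCommGroup M₂]
    [Module K M₂] [AddCommGroup M₃] [Module K M₃] [AddCommGroup M₄] [Module K M₄]
    (f : M →ₗ[K] M₂) (g : M₃ →ₗ[K] M₄) :
    LinearMap.range (f.prodMap g) = (LinearMap.range f).prod (LinearMap.range g) := by
  ext ⟨a, b⟩
  simp only [LinearMap.mem_range, Submodule.mem_prod, Prod.ext_iff, LinearMap.prodMap_apply]
  constructor
  · rintro ⟨⟨x, y⟩, hx, hy⟩; exact ⟨⟨x, hx⟩, ⟨y, hy⟩⟩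
  · rintro ⟨⟨x, hx⟩, ⟨y, hy⟩⟩; exact ⟨(x, y), hx, hy⟩

variable {W U : Submodule K X}

/-- Glue an endomorphism of `W` and one of `U` into an endomorphism of `X`. -/
noncomputable def glue (hc : IsCompl W U) (g : Module.End K W) (a : Module.End K U) :
    Module.End K X :=
  (Submodule.prodEquivOfIsCompl W U hc).conj (g.prodMap a)

lemma glue_pow (hc : IsCompl W U) (g : Module.End K W) (a : Module.End K U) (i : ℕ) :
    (glue hc g a) ^ i = (Submodule.prodEquivOfIsCompl W U hc).conj ((g ^ i).prodMap (a ^ i)) := by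
  induction i with
  | zero => simp [pow_zero, LinearMap.prodMap_one, Module.End.one_eq_id, LinearEquiv.conj_id]
  | succ i ih =>
      rw [pow_succ, ih, glue]
      rw [show ∀ (u v : Module.End K (W × U)),
        (Submodule.prodEquivOfIsCompl W U hc).conj u * (Submodule.prodEquivOfIsCompl W U hc).conj v
          = (Submodule.prodEquivOfIsCompl W U hc).conj (u * v) from fun u v =>
          ((Submodule.prodEquivOfIsCompl W U hc).conj_comp v u).symm]
      rw [LinearMap.prodMap_mul, pow_succ, pow_succ]

lemma coe_comp_inl (hc : IsCompl W U) :
    (Submodule.prodEquivOfIsCompl W U hc : W × U →ₗ[K] X) ∘ₗ LinearMap.inl K W U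
      = W.subtype := by
  ext x; simp [Submodule.coe_prodEquivOfIsCompl']

lemma coe_comp_inr (hc : IsCompl W U) :
    (Submodule.prodEquivOfIsCompl W U hc : W × U →ₗ[K] X) ∘ₗ LinearMap.inr K W U
      = U.subtype := by
  ext x; simp [Submodule.coe_prodEquivOfIsCompl']

lemma map_prod_bot (hc : IsCompl W U) (S : Submodule K W) :
    (S.prod ⊥).map (Submodule.prodEquivOfIsCompl W U hc : W × U →ₗ[K] X)
      = S.map W.subtype := by
  rw [← Submodule.map_inl, ← Submodule.map_comp, coe_comp_inl]

lemma map_bot_prod (hc : IsCompl W U) (S : Submodule K U) :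
    ((⊥ : Submodule K W).prod S).map (Submodule.prodEquivOfIsCompl W U hc : W × U →ₗ[K] X)
      = S.map U.subtype := by
  rw [← Submodule.map_inr, ← Submodule.map_comp, coe_comp_inr]

lemma fitt_glue (hc : IsCompl W U) {g : Module.End K W} {a : Module.End K U}
    (hg : IsNilpotent g) (ha : IsUnit a) : fitt (glue hc g a) = (W, U) := by
  obtain ⟨m, hm⟩ := hg
  have ha' : ∀ i : ℕ, Function.Bijective (a ^ i) := fun i =>
    (Module.End.isUnit_iff _).mp (ha.pow i)
  have hker : ∀ i : ℕ, LinearMap.ker ((glue hc g a) ^ i) = (LinearMap.ker (g ^ i)).map W.subtype := by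
    intro i
    rw [glue_pow, ker_conj, LinearMap.ker_prodMap, LinearMap.ker_eq_bot.mpr (ha' i).injective,
      map_prod_bot]
  have hrange : ∀ i : ℕ, LinearMap.range ((glue hc g a) ^ i)
      = ((LinearMap.range (g ^ i)).prod ⊤).map (Submodule.prodEquivOfIsCompl W U hc : W × U →ₗ[K] X) := by
    intro i
    rw [glue_pow, range_conj, range_prodMap, LinearMap.range_eq_top.mpr (ha' i).surjective]
  have h1 : (⨆ i, LinearMap.ker ((glue hc g a) ^ i)) = W := by
    simp_rw [hker]
    rw [← Submodule.map_iSup]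
    have : (⨆ i, LinearMap.ker (g ^ i)) = ⊤ := by
      refine le_antisymm le_top ?_
      have : LinearMap.ker (g ^ m) = ⊤ := by rw [hm]; exact LinearMap.ker_zero
      exact this ▸ le_iSup (fun i => LinearMap.ker (g ^ i)) m
    rw [this, Submodule.map_subtype_top]
  have h2 : (⨅ i, LinearMap.range ((glue hc g a) ^ i)) = U := by
    refine le_antisymm ?_ ?_
    · refine (iInf_le _ m).trans ?_
      rw [hrange m, hm, LinearMap.range_zero]
      rw [show ((⊥ : Submodule K W).prod ⊤).map _ = Submodule.map U.subtype ⊤ from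
        map_bot_prod hc ⊤, Submodule.map_subtype_top]
    · refine le_iInf fun i => ?_
      rw [hrange i]
      calc U = Submodule.map U.subtype ⊤ := (Submodule.map_subtype_top U).symm
        _ = ((⊥ : Submodule K W).prod ⊤).map _ := (map_bot_prod hc ⊤).symm
        _ ≤ _ := Submodule.map_mono (Submodule.prod_mono bot_le le_rfl)
  exact Prod.ext h1 h2


lemma mem_iSup_ker_iff (T : Module.End K X) (z : X) :
    z ∈ (⨆ i, LinearMap.ker (T ^ i)) ↔ ∃ i, (T ^ i) z = 0 := by
  have := Submodule.mem_iSup_of_chain T.iterateKer z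
  exact this

-- invariance of the Fitting components
lemma fitt_fst_mapsTo {T : Module.End K X} (h : fitt T = (W, U)) :
    ∀ x ∈ W, T x ∈ W := by
  have h1 : (⨆ i, LinearMap.ker (T ^ i)) = W := congrArg Prod.fst h
  intro x hx
  rw [← h1] at hx ⊢
  rw [mem_iSup_ker_iff] at hx ⊢
  obtain ⟨i, hi⟩ := hx
  refine ⟨i, ?_⟩
  rw [← Module.End.mul_apply, ← pow_succ, pow_succ', Module.End.mul_apply, hi, map_zero]

lemma fitt_snd_mapsTo {T : Module.End K X} (h : fitt T = (W, U)) :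
    ∀ x ∈ U, T x ∈ U := by
  have h2 : (⨅ i, LinearMap.range (T ^ i)) = U := congrArg Prod.snd h
  intro x hx
  rw [← h2] at hx ⊢
  rw [Submodule.mem_iInf] at hx ⊢
  intro i
  obtain ⟨y, hy⟩ := hx i
  exact ⟨T y, by rw [← Module.End.mul_apply, ← pow_succ, pow_succ', Module.End.mul_apply, hy]⟩

lemma isNilpotent_restrict_fst {T : Module.End K X} (h : fitt T = (W, U)) :
    IsNilpotent (T.restrict (fitt_fst_mapsTo h)) := by
  have h1 : (⨆ i, LinearMap.ker (T ^ i)) = W := congrArg Prod.fst h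
  obtain ⟨m, hm⟩ := Filter.eventually_atTop.mp T.eventually_iSup_ker_pow_eq
  refine ⟨m, ?_⟩
  rw [Module.End.pow_restrict]
  ext x
  have hx : (x : X) ∈ LinearMap.ker (T ^ m) := by
    rw [← hm m le_rfl, h1]; exact x.2
  simpa using hx

lemma isUnit_restrict_snd {T : Module.End K X} (h : fitt T = (W, U)) :
    IsUnit (T.restrict (fitt_snd_mapsTo h)) := by
  have h1 : (⨆ i, LinearMap.ker (T ^ i)) = W := congrArg Prod.fst h
  have h2 : (⨅ i, LinearMap.range (T ^ i)) = U := congrArg Prod.snd h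
  have hc : IsCompl W U := by
    have := T.isCompl_iSup_ker_pow_iInf_range_pow
    rwa [h1, h2] at this
  rw [Module.End.isUnit_iff]
  constructor
  · -- injective
    intro x y hxy
    have hT : T (x - y : U) = 0 := by
      have : T x = T y := congrArg Subtype.val hxy
      simp [map_sub, this]
    have hker : ((x - y : U) : X) ∈ W := by
      rw [← h1]
      refine le_iSup (fun i => LinearMap.ker (T ^ i)) 1 ?_
      simpa [pow_one] using hT
    have : ((x - y : U) : X) ∈ W ⊓ U := ⟨hker, (x - y : U).2⟩
    rw [hc.inf_eq_bot] at this
    have : (x - y : U) = 0 := Subtype.ext (by simpa using this)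
    exact sub_eq_zero.mp this
  · -- surjective
    intro y
    obtain ⟨m, hm⟩ := Filter.eventually_atTop.mp T.eventually_iInf_range_pow_eq
    have hy : (y : X) ∈ LinearMap.range (T ^ (m + 1)) := by
      rw [← hm (m + 1) (Nat.le_succ m), h2]; exact y.2
    obtain ⟨z, hz⟩ := hy
    have hx : (T ^ m) z ∈ U := by
      rw [← h2, hm m le_rfl]
      exact ⟨z, rfl⟩
    refine ⟨⟨(T ^ m) z, hx⟩, ?_⟩
    apply Subtype.ext
    have : T ((T ^ m) z) = (T ^ (m + 1)) z := by
      rw [← Module.End.mul_apply, ← pow_succ']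
    simpa [LinearMap.restrict_apply, this] using hz


lemma glue_restrict (hc : IsCompl W U) (T : Module.End K X)
    (hW : ∀ x ∈ W, T x ∈ W) (hU : ∀ x ∈ U, T x ∈ U) :
    glue hc (T.restrict hW) (T.restrict hU) = T := by
  ext x
  obtain ⟨⟨w, u⟩, rfl⟩ := (Submodule.prodEquivOfIsCompl W U hc).surjective x
  simp [glue, LinearEquiv.conj_apply_apply, Submodule.coe_prodEquivOfIsCompl',
    LinearMap.restrict_coe_apply, map_add]

lemma restrict_glue_fst (hc : IsCompl W U) (g : Module.End K W) (a : Module.End K U)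
    (h : ∀ x ∈ W, glue hc g a x ∈ W) : (glue hc g a).restrict h = g := by
  ext x
  rw [LinearMap.restrict_coe_apply]
  simp [glue, LinearEquiv.conj_apply_apply, Submodule.prodEquivOfIsCompl_symm_apply_left,
    Submodule.coe_prodEquivOfIsCompl']

lemma restrict_glue_snd (hc : IsCompl W U) (g : Module.End K W) (a : Module.End K U)
    (h : ∀ x ∈ U, glue hc g a x ∈ U) : (glue hc g a).restrict h = a := by
  ext x
  rw [LinearMap.restrict_coe_apply]
  simp [glue, LinearEquiv.conj_apply_apply, Submodule.prodEquivOfIsCompl_symm_apply_right,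
    Submodule.coe_prodEquivOfIsCompl']


noncomputable def spanPair {n k : ℕ} (hk : k ≤ n) (hn : Module.finrank K X = n)
    (s : {s : Fin k ⊕ Fin (n - k) → X // LinearIndependent K s}) : CPair K X := by
  refine ⟨(span K (range ((s : Fin k ⊕ Fin (n - k) → X) ∘ Sum.inl)),
           span K (range ((s : Fin k ⊕ Fin (n - k) → X) ∘ Sum.inr))), ?_⟩
  obtain ⟨h1, h2, hd⟩ := linearIndependent_sum.mp s.2
  refine ⟨hd, ?_⟩
  rw [codisjoint_iff, ← Submodule.span_union, ← Sum.range_eq]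
  apply Submodule.eq_top_of_finrank_eq
  rw [finrank_span_eq_card s.2, hn]
  simp only [Fintype.card_sum, Fintype.card_fin]
  omega

lemma spanPair_fst (hk : k ≤ n) (hn : Module.finrank K X = n)
    (s : {s : Fin k ⊕ Fin (n - k) → X // LinearIndependent K s}) :
    (spanPair hk hn s).1.1 = span K (range ((s : Fin k ⊕ Fin (n - k) → X) ∘ Sum.inl)) := rfl

lemma spanPair_snd (hk : k ≤ n) (hn : Module.finrank K X = n)
    (s : {s : Fin k ⊕ Fin (n - k) → X // LinearIndependent K s}) :
    (spanPair hk hn s).1.2 = span K (range ((s : Fin k ⊕ Fin (n - k) → X) ∘ Sum.inr)) := rfl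

lemma spanPair_dim {n k : ℕ} (hk : k ≤ n) (hn : Module.finrank K X = n)
    (s : {s : Fin k ⊕ Fin (n - k) → X // LinearIndependent K s}) :
    Module.finrank K (spanPair hk hn s).1.1 = k := by
  rw [spanPair_fst, finrank_span_eq_card (linearIndependent_sum.mp s.2).1, Fintype.card_fin]

noncomputable def liFiberEquiv {n k : ℕ} (hk : k ≤ n) (hn : Module.finrank K X = n)
    (p : CPair K X) (hp1 : Module.finrank K p.1.1 = k) (hp2 : Module.finrank K p.1.2 = n - k) :
    {s : {s : Fin k ⊕ Fin (n - k) → X // LinearIndependent K s} // spanPair hk hn s = p} ≃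
      {t : Fin k → p.1.1 // LinearIndependent K t} ×
        {t : Fin (n - k) → p.1.2 // LinearIndependent K t} where
  toFun s :=
    have h1 : span K (range ((s.1 : Fin k ⊕ Fin (n - k) → X) ∘ Sum.inl)) = p.1.1 :=
      congrArg (Prod.fst ∘ Subtype.val) s.2
    have h2 : span K (range ((s.1 : Fin k ⊕ Fin (n - k) → X) ∘ Sum.inr)) = p.1.2 :=
      congrArg (Prod.snd ∘ Subtype.val) s.2
    (⟨fun i => ⟨s.1.1 (Sum.inl i), h1 ▸ subset_span (mem_range_self i)⟩, by
        apply LinearIndependent.of_comp p.1.1.subtype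
        exact (linearIndependent_sum.mp s.1.2).1⟩,
     ⟨fun i => ⟨s.1.1 (Sum.inr i), h2 ▸ subset_span (mem_range_self i)⟩, by
        apply LinearIndependent.of_comp p.1.2.subtype
        exact (linearIndependent_sum.mp s.1.2).2.1⟩)
  invFun t := by
    refine ⟨⟨Sum.elim (p.1.1.subtype ∘ t.1.1) (p.1.2.subtype ∘ t.2.1), ?_⟩, ?_⟩
    · refine linearIndependent_sum.mpr ⟨t.1.2.map' _ (ker_subtype _),
        t.2.2.map' _ (ker_subtype _), ?_⟩
      refine Disjoint.mono ?_ ?_ p.2.disjoint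
      · refine span_le.mpr ?_
        rintro x ⟨i, rfl⟩
        exact (t.1.1 i).2
      · refine span_le.mpr ?_
        rintro x ⟨i, rfl⟩
        exact (t.2.1 i).2
    · refine Subtype.ext (Prod.ext ?_ ?_)
      · show span K (range (p.1.1.subtype ∘ t.1.1)) = p.1.1
        rw [Set.range_comp, Submodule.span_image]
        rw [show span K (range t.1.1) = ⊤ from Submodule.eq_top_of_finrank_eq
          (by rw [finrank_span_eq_card t.1.2, Fintype.card_fin, hp1])]
        exact Submodule.map_subtype_top _
      · show span K (range (p.1.2.subtype ∘ t.2.1)) = p.1.2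
        rw [Set.range_comp, Submodule.span_image]
        rw [show span K (range t.2.1) = ⊤ from Submodule.eq_top_of_finrank_eq
          (by rw [finrank_span_eq_card t.2.2, Fintype.card_fin, hp2])]
        exact Submodule.map_subtype_top _
  left_inv s := Subtype.ext (Subtype.ext (funext fun x => by cases x <;> rfl))
  right_inv t := by
    refine Prod.ext ?_ ?_ <;> exact Subtype.ext (funext fun i => Subtype.ext rfl)

theorem cpair_count {n k : ℕ} (hk : k ≤ n) (hn : Module.finrank K X = n) :
    Nat.card {p : CPair K X // Module.finrank K p.1.1 = k} *
      (gl (Fintype.card K) k * gl (Fintype.card K) (n - k)) = gl (Fintype.card K) n := by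
  classical
  haveI : Finite X := Module.finite_of_finite K
  haveI : Finite (Submodule K X) :=
    Finite.of_injective (fun p => (p : Set X)) SetLike.coe_injective
  haveI : Fintype (CPair K X) := Fintype.ofFinite _
  have hsum : Nat.card {s : Fin k ⊕ Fin (n - k) → X // LinearIndependent K s}
      = gl (Fintype.card K) n := by
    have e : Fin k ⊕ Fin (n - k) ≃ Fin n := finSumFinEquiv.trans (finCongr (by omega))
    have d : {s : Fin k ⊕ Fin (n - k) → X // LinearIndependent K s} ≃
        {s : Fin n → X // LinearIndependent K s} :=
      { toFun := fun s => ⟨s.1 ∘ e.symm, (linearIndependent_equiv e.symm).mpr s.2⟩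
        invFun := fun s => ⟨s.1 ∘ e, (linearIndependent_equiv e).mpr s.2⟩
        left_inv := fun s => Subtype.ext (funext fun i => by simp)
        right_inv := fun s => Subtype.ext (funext fun i => by simp) }
    rw [Nat.card_congr d, li_card n hn]
  rw [← hsum, nat_card_fiber_sum (spanPair hk hn)]
  have hfib : ∀ p : CPair K X,
      Nat.card {s : {s : Fin k ⊕ Fin (n - k) → X // LinearIndependent K s} //
          spanPair hk hn s = p}
        = if Module.finrank K p.1.1 = k then
            gl (Fintype.card K) k * gl (Fintype.card K) (n - k) else 0 := by
    intro p
    by_cases hp : Module.finrank K p.1.1 = k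
    · have hp2 : Module.finrank K p.1.2 = n - k := by
        have := Submodule.finrank_add_eq_of_isCompl p.2
        rw [hn] at this
        omega
      rw [if_pos hp, Nat.card_congr (liFiberEquiv hk hn p hp hp2), Nat.card_prod,
        li_card k hp, li_card (n - k) hp2]
    · rw [if_neg hp]
      have : IsEmpty {s : {s : Fin k ⊕ Fin (n - k) → X // LinearIndependent K s} //
          spanPair hk hn s = p} := by
        refine ⟨fun s => hp ?_⟩
        rw [← s.2]
        exact spanPair_dim hk hn s.1
      exact Nat.card_of_isEmpty
  simp_rw [hfib]
  rw [← Finset.sum_filter, Finset.sum_const, smul_eq_mul, Nat.card_eq_fintype_card,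
    Fintype.card_subtype]


-- new material
noncomputable def fittP (T : Module.End K X) : CPair K X := ⟨fitt T, isCompl_fitt T⟩

noncomputable def fittFiberEquiv (p : CPair K X) :
    {T : Module.End K X // fittP T = p} ≃
      {g : Module.End K p.1.1 // IsNilpotent g} × {a : Module.End K p.1.2 // IsUnit a} where
  toFun T :=
    have h : fitt T.1 = (p.1.1, p.1.2) := congrArg Subtype.val T.2
    (⟨T.1.restrict (fitt_fst_mapsTo h), isNilpotent_restrict_fst h⟩,
     ⟨T.1.restrict (fitt_snd_mapsTo h), isUnit_restrict_snd h⟩)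
  invFun ga := ⟨glue p.2 ga.1.1 ga.2.1, Subtype.ext (fitt_glue p.2 ga.1.2 ga.2.2)⟩
  left_inv T := Subtype.ext (glue_restrict p.2 T.1
    (fitt_fst_mapsTo (congrArg Subtype.val T.2)) (fitt_snd_mapsTo (congrArg Subtype.val T.2)))
  right_inv ga := by
    refine Prod.ext (Subtype.ext ?_) (Subtype.ext ?_)
    · apply restrict_glue_fst
      exact fitt_fst_mapsTo (fitt_glue p.2 ga.1.2 ga.2.2)
    · apply restrict_glue_snd
      exact fitt_snd_mapsTo (fitt_glue p.2 ga.1.2 ga.2.2)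

lemma card_end (n : ℕ) (hn : Module.finrank K X = n) :
    Nat.card (Module.End K X) = Fintype.card K ^ (n * n) := by
  classical
  rw [Nat.card_congr (endAlgEquiv X n hn).toEquiv,
    Nat.card_congr (algEquivMatrix' (R := K) (n := Fin n)).toEquiv]
  show Nat.card (Fin n → Fin n → K) = _
  rw [Nat.card_eq_fintype_card, Fintype.card_fun, Fintype.card_fun, Fintype.card_fin, ← pow_mul]

theorem grouped (n : ℕ) (hn : Module.finrank K X = n) :
    Fintype.card K ^ (n * n) = ∑ k ∈ Finset.range (n + 1),
      Nat.card {p : CPair K X // Module.finrank K p.1.1 = k} *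
        (nilCard K k * gl (Fintype.card K) (n - k)) := by
  classical
  haveI : Finite X := Module.finite_of_finite K
  haveI : Finite (Submodule K X) :=
    Finite.of_injective (fun p => (p : Set X)) SetLike.coe_injective
  haveI : Fintype (CPair K X) := Fintype.ofFinite _
  haveI : Finite (Module.End K X) :=
    Finite.of_injective (fun f => (f : X → X)) (by intro f g h; ext x; exact congrFun h x)
  rw [← card_end n hn, nat_card_fiber_sum (fittP (X := X))]
  have hfib : ∀ p : CPair K X, Nat.card {T : Module.End K X // fittP T = p}
      = nilCard K (Module.finrank K p.1.1) * gl (Fintype.card K) (Module.finrank K p.1.2) := by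
    intro p
    rw [Nat.card_congr (fittFiberEquiv p), Nat.card_prod, nilCard_eq p.1.1 _ rfl,
      unitCard_eq p.1.2 _ rfl]
  simp_rw [hfib]
  rw [← Finset.sum_fiberwise_of_maps_to (g := fun p : CPair K X => Module.finrank K p.1.1)
    (t := Finset.range (n + 1)) (fun p _ => Finset.mem_range.mpr (by
      have h := Submodule.finrank_le (p : Submodule K X × Submodule K X).1
      rw [hn] at h
      simpa using Nat.lt_succ_of_le h)) _]
  refine Finset.sum_congr rfl fun k hk => ?_
  have hconst : ∀ p ∈ Finset.univ.filter (fun p : CPair K X => Module.finrank K p.1.1 = k),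
      nilCard K (Module.finrank K p.1.1) * gl (Fintype.card K) (Module.finrank K p.1.2)
        = nilCard K k * gl (Fintype.card K) (n - k) := by
    intro p hp
    have hd : Module.finrank K p.1.1 = k := (Finset.mem_filter.mp hp).2
    have hd2 : Module.finrank K p.1.2 = n - k := by
      have := Submodule.finrank_add_eq_of_isCompl p.2
      rw [hn] at this
      omega
    rw [hd, hd2]
  rw [Finset.sum_congr rfl hconst, Finset.sum_const, smul_eq_mul,
    Nat.card_eq_fintype_card, Fintype.card_subtype]


-- the key rational identity, for every finite-dimensional space
theorem key_q (n : ℕ) (hn : Module.finrank K X = n) :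
    ((Fintype.card K : ℚ)) ^ (n * n) =
      (gl (Fintype.card K) n : ℚ) *
        ∑ k ∈ Finset.range (n + 1), (nilCard K k : ℚ) / (gl (Fintype.card K) k : ℚ) := by
  have h2 : 2 ≤ Fintype.card K := Fintype.one_lt_card
  have hgl : ∀ j, ((gl (Fintype.card K) j : ℚ)) ≠ 0 :=
    fun j => Nat.cast_ne_zero.mpr (gl_pos h2 j).ne'
  have hgrp := congrArg (Nat.cast : ℕ → ℚ) (grouped (X := X) n hn)
  push_cast at hgrp
  rw [hgrp, Finset.mul_sum]
  refine Finset.sum_congr rfl fun k hk => ?_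
  have hk' : k ≤ n := by have := Finset.mem_range.mp hk; omega
  have hc := congrArg (Nat.cast : ℕ → ℚ) (cpair_count (X := X) hk' hn)
  push_cast at hc
  have hre : (gl (Fintype.card K) n : ℚ) * ((nilCard K k : ℚ) / (gl (Fintype.card K) k : ℚ))
      = (nilCard K k : ℚ) * (gl (Fintype.card K) n : ℚ) / (gl (Fintype.card K) k : ℚ) := by
    ring
  rw [hre, eq_div_iff (hgl k)]
  linear_combination (nilCard K k : ℚ) * hc

theorem main_q (n : ℕ) :
    (nilCard K n : ℚ) * (Fintype.card K : ℚ) ^ n = (Fintype.card K : ℚ) ^ (n * n) := by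
  have h2 : 2 ≤ Fintype.card K := Fintype.one_lt_card
  have hgl : ∀ j, ((gl (Fintype.card K) j : ℚ)) ≠ 0 :=
    fun j => Nat.cast_ne_zero.mpr (gl_pos h2 j).ne'
  have hq0 : (Fintype.card K : ℚ) ≠ 0 := by positivity
  cases n with
  | zero =>
      have h0 := key_q (K := K) (X := Fin 0 → K) 0 (Module.finrank_fin_fun K)
      have hgl0 : (gl (Fintype.card K) 0 : ℚ) = 1 := by norm_num [gl]
      rw [Finset.sum_range_one, hgl0, div_one, one_mul] at h0
      norm_num
      exact_mod_cast h0.symm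
  | succ m =>
      have hm := key_q (K := K) (X := Fin m → K) m (Module.finrank_fin_fun K)
      have hm1 := key_q (K := K) (X := Fin (m + 1) → K) (m + 1) (Module.finrank_fin_fun K)
      rw [Finset.sum_range_succ] at hm1
      set q : ℚ := (Fintype.card K : ℚ)
      set S : ℚ := ∑ k ∈ Finset.range (m + 1), (nilCard K k : ℚ) / (gl (Fintype.card K) k : ℚ)
        with hS
      have hglsucc : (gl (Fintype.card K) (m + 1) : ℚ)
          = (q ^ (m + 1) - 1) * (q ^ m * gl (Fintype.card K) m) := by
        rw [gl_succ]
        have h1 : 1 ≤ Fintype.card K ^ (m + 1) := Nat.one_le_pow _ _ (by omega)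
        push_cast [Nat.cast_sub h1]
        ring
      have hexp : (q : ℚ) ^ ((m + 1) * (m + 1)) = q ^ (m * m) * q ^ m * q ^ m * q := by
        rw [show (m + 1) * (m + 1) = m * m + m + m + 1 by ring, pow_add, pow_add, pow_add, pow_one]
      rw [hexp] at hm1
      -- hm1 : q^(m*m) * q^m * q^m * q = gl(m+1) * (S + N/gl(m+1))
      -- hm  : q^(m*m) = gl m * S
      have hN : (nilCard K (m + 1) : ℚ) = q ^ (m * m) * q ^ m := by
        have e1 : (gl (Fintype.card K) (m + 1) : ℚ) *
            (S + (nilCard K (m + 1) : ℚ) / (gl (Fintype.card K) (m + 1) : ℚ))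
            = (gl (Fintype.card K) (m + 1) : ℚ) * S + (nilCard K (m + 1) : ℚ) := by
          rw [mul_add, mul_div_cancel₀ _ (hgl (m + 1))]
        rw [e1, hglsucc] at hm1
        linear_combination -hm1 + (q ^ (m + 1) - 1) * q ^ m * hm
      rw [hexp, hN]
      ring

end FineHerstein

theorem stmt_19 (K : Type*) [Field K] [Fintype K] (q : ℕ) (hq : Fintype.card K = q)
    (X : Type*) [AddCommGroup X] [Module K X] [FiniteDimensional K X]
    (n : ℕ) (hn : Module.finrank K X = n) :
    Nat.card {T : Module.End K X // IsNilpotent T} * q ^ n = q ^ (n ^ 2) := by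
  subst hq
  rw [FineHerstein.nilCard_eq X n hn, pow_two]
  exact_mod_cast FineHerstein.main_q (K := K) n
end
end
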